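/- arXiv:1103.3760 — 10 statements merged into one kernel-verified Lean document; each statement's English description precedes it below -/
import Mathlib

section
/- Let W : (0,∞) → ℝ be continuous with W(s) > 0 for all s > 0 and ∫₀^∞ (1+s)² W(s) ds < ∞. If u ∈ C²(ℝ) solves u'' + W·u = 0 and there exists s₀ ≥ 0 with u(s) > 0 for all s > s₀, then the limit C₁ = lim_{s→∞} u'(s) exists, is nonnegative, and u'(s) = C₁ + ∫_s^∞ W(τ) u(τ) dτ for all s > s₀. -/
open MeasureTheory Set Filter Topology

theorem stmt0 (W u : ℝ → ℝ) (s₀ : ℝ)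
    (hWc : ContinuousOn W (Ioi 0)) (hWpos : ∀ s > (0:ℝ), 0 < W s)
    (hWint : IntegrableOn (fun s => (1 + s)^2 * W s) (Ioi 0))
    (hu : ContDiff ℝ 2 u)
    (hode : ∀ s > (0:ℝ), deriv (deriv u) s + W s * u s = 0)
    (hs₀ : 0 ≤ s₀) (hupos : ∀ s > s₀, 0 < u s) :
    ∃ C₁ : ℝ, 0 ≤ C₁ ∧ Tendsto (deriv u) atTop (𝓝 C₁) ∧
      ∀ s > s₀, deriv u s = C₁ + ∫ τ in Ioi s, W τ * u τ := by
  -- regularity facts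
  have hu2 : ContDiff ℝ (1 + 1) u := by
    rw [show ((1:WithTop ℕ∞) + 1) = 2 by norm_num]; exact hu
  obtain ⟨hdiff, -, hd1⟩ := contDiff_succ_iff_deriv.mp hu2
  obtain ⟨hdd, hddcont⟩ := contDiff_one_iff_deriv.mp hd1
  have hd1cont : Continuous (deriv u) := hd1.continuous
  -- deriv u is antitone on Ici s₀
  have hanti : AntitoneOn (deriv u) (Ici s₀) := by
    apply antitoneOn_of_deriv_nonpos (convex_Ici s₀) hd1cont.continuousOn
      hdd.differentiableOn
    intro x hx
    rw [interior_Ici] at hx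
    have hx0 : 0 < x := lt_of_le_of_lt hs₀ hx
    have := hode x hx0
    nlinarith [mul_pos (hWpos x hx0) (hupos x hx)]
  -- linear upper bound from concavity
  have key : ∀ s, s₀ < s → ∀ t, s ≤ t → u t ≤ u s + deriv u s * (t - s) := by
    intro s hs t ht
    set d := deriv u s with hd
    have hg : ∀ x : ℝ, HasDerivAt (fun y => u s + d * (y - s) - u y)
        (d - deriv u x) x := by
      intro x
      have h1 : HasDerivAt (fun y : ℝ => u s + d * (y - s)) d x := by
        simpa using (((hasDerivAt_id x).sub_const s).const_mul d).const_add (u s)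
      exact h1.sub (hdiff x).hasDerivAt
    have hmono : MonotoneOn (fun y => u s + d * (y - s) - u y) (Ici s) := by
      apply monotoneOn_of_deriv_nonneg (convex_Ici s)
      · exact ((continuous_const.add (continuous_const.mul
          (continuous_id.sub continuous_const))).sub hu.continuous).continuousOn
      · exact fun x _ => (hg x).differentiableAt.differentiableWithinAt
      · intro x hx
        rw [interior_Ici] at hx
        rw [(hg x).deriv]
        have : deriv u x ≤ d := hanti (le_of_lt hs) (le_of_lt (hs.trans hx)) hx.le
        linarith
    have h0 := hmono (self_mem_Ici) (mem_Ici.mpr ht) ht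
    simp only [sub_self, mul_zero, add_zero] at h0
    linarith
  -- deriv u is nonnegative after s₀
  have hder_nonneg : ∀ s, s₀ < s → 0 ≤ deriv u s := by
    intro s hs
    by_contra h
    push_neg at h
    set d := deriv u s with hd
    set t := s + u s / (-d) + 1 with hts
    have hus : 0 < u s := hupos s hs
    have hpos : 0 < u s / (-d) := div_pos hus (by linarith)
    have hst : s ≤ t := by simp only [hts]; linarith
    have h1 := key s hs t hst
    have h2 : u s + d * (t - s) = d := by
      have hne : -d ≠ 0 := by linarith
      rw [hts]
      field_simp [h.ne]
      ring
    have := hupos t (lt_of_lt_of_le hs hst)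
    rw [h2] at h1
    linarith
  -- the limit
  set a := s₀ + 1 with ha_def
  have ha : s₀ < a := by linarith
  set g : ℝ → ℝ := fun t => deriv u (max t a) with hg_def
  have hg_anti : Antitone g := by
    intro t₁ t₂ h
    exact hanti (le_trans ha.le (le_max_right t₁ a)) (le_trans ha.le (le_max_right t₂ a))
      (max_le_max h le_rfl)
  have hg_nonneg : ∀ t, 0 ≤ g t :=
    fun t => hder_nonneg _ (lt_of_lt_of_le ha (le_max_right t a))
  have hbdd : BddBelow (range g) := ⟨0, fun x ⟨t, htx⟩ => htx ▸ hg_nonneg t⟩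
  have htend_g : Tendsto g atTop (𝓝 (⨅ t, g t)) := tendsto_atTop_ciInf hg_anti hbdd
  set C₁ := ⨅ t, g t with hC₁
  have hC₁0 : 0 ≤ C₁ := le_ciInf hg_nonneg
  have htend : Tendsto (deriv u) atTop (𝓝 C₁) := by
    apply htend_g.congr'
    filter_upwards [eventually_ge_atTop a] with t ht
    simp [hg_def, max_eq_left ht]
  refine ⟨C₁, hC₁0, htend, ?_⟩
  intro s hs
  have hs0 : 0 < s := lt_of_le_of_lt hs₀ hs
  -- integrability of W * u on Ioi s
  set C := u s + deriv u s with hCdef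
  have hC0 : 0 < C := by
    have := hder_nonneg s hs; have := hupos s hs; positivity
  have hint : IntegrableOn (fun τ => W τ * u τ) (Ioi s) := by
    have hbig : IntegrableOn (fun τ => C * ((1 + τ)^2 * W τ)) (Ioi s) :=
      (hWint.mono_set (Ioi_subset_Ioi hs0.le)).const_mul C
    apply Integrable.mono' hbig
    · exact ContinuousOn.aestronglyMeasurable
        ((hWc.mono (Ioi_subset_Ioi hs0.le)).mul hu.continuous.continuousOn)
        measurableSet_Ioi
    · filter_upwards [ae_restrict_mem measurableSet_Ioi] with τ hτ
      have hτs : s < τ := hτ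
      have hτ0 : 0 < τ := hs0.trans hτs
      have hW := hWpos τ hτ0
      have huτ := hupos τ (hs.trans hτs)
      have hub := key s hs τ hτs.le
      have hds := hder_nonneg s hs
      have hus := hupos s hs
      have h1 : u τ ≤ C * (1 + τ) := by nlinarith
      rw [Real.norm_eq_abs, abs_of_pos (mul_pos hW huτ)]
      calc W τ * u τ ≤ W τ * (C * (1 + τ)) := by nlinarith
        _ ≤ C * ((1 + τ)^2 * W τ) := by nlinarith [mul_pos (mul_pos hC0 hW) (mul_pos (by linarith : (0:ℝ) < 1 + τ) hτ0)]
  -- FTC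
  have hfts : ∀ t, s ≤ t → ∫ τ in s..t, W τ * u τ = deriv u s - deriv u t := by
    intro t ht
    have h1 : ∫ τ in s..t, deriv (deriv u) τ = deriv u t - deriv u s :=
      intervalIntegral.integral_deriv_eq_sub (fun x _ => hdd.differentiableAt)
        (hddcont.intervalIntegrable s t)
    have h2 : ∫ τ in s..t, W τ * u τ = ∫ τ in s..t, -(deriv (deriv u) τ) := by
      apply intervalIntegral.integral_congr
      intro x hx
      rw [uIcc_of_le ht] at hx
      have hx0 : 0 < x := lt_of_lt_of_le hs0 hx.1
      have := hode x hx0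
      dsimp only
      linarith
    rw [h2, intervalIntegral.integral_neg, h1]
    ring
  have hlim1 : Tendsto (fun t => ∫ τ in s..t, W τ * u τ) atTop
      (𝓝 (∫ τ in Ioi s, W τ * u τ)) :=
    intervalIntegral_tendsto_integral_Ioi s hint tendsto_id
  have hlim2 : Tendsto (fun t => ∫ τ in s..t, W τ * u τ) atTop (𝓝 (deriv u s - C₁)) := by
    apply (tendsto_const_nhds.sub htend).congr'
    filter_upwards [eventually_ge_atTop s] with t ht
    exact (hfts t ht).symm
  have heq := tendsto_nhds_unique hlim1 hlim2
  linarith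
end

section
/- Let W : (0,∞) → ℝ be continuous with W(s) > 0 and ∫₀^∞ (1+s)² W(s) ds < ∞. If u ∈ C² solves u'' + W·u = 0 and u(s) > 0 for s > s₀, then there exist constants C₀, C₁ ∈ ℝ with C₁ ≥ 0 such that u(s) = C₀ + C₁ s + O(g(s)) and u'(s) = C₁ + O(h(s)) as s → ∞, where h(s) = ∫_s^∞ (1+τ) W(τ) dτ and g(s) = ∫_s^∞ (1+τ)² W(τ) dτ. -/
open MeasureTheory Set Filter Topology Asymptotics

theorem stmt1 (W u : ℝ → ℝ) (s₀ : ℝ)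
    (hWc : ContinuousOn W (Ioi 0)) (hWpos : ∀ s > (0:ℝ), 0 < W s)
    (hWint : IntegrableOn (fun s => (1 + s)^2 * W s) (Ioi 0))
    (hu : ContDiff ℝ 2 u)
    (hode : ∀ s > (0:ℝ), deriv (deriv u) s + W s * u s = 0)
    (hupos : ∀ s > s₀, 0 < u s) :
    ∃ C₀ C₁ : ℝ, 0 ≤ C₁ ∧
      (fun s => u s - (C₀ + C₁ * s)) =O[atTop]
        (fun s => ∫ τ in Ioi s, (1 + τ)^2 * W τ) ∧
      (fun s => deriv u s - C₁) =O[atTop]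
        (fun s => ∫ τ in Ioi s, (1 + τ) * W τ) := by
  -- smoothness consequences
  have hder := contDiff_succ_iff_deriv.mp (show ContDiff ℝ (1 + 1) u by
    norm_num; exact hu)
  have hu1 : Differentiable ℝ u := hder.1
  have hcd1 : ContDiff ℝ 1 (deriv u) := hder.2.2
  have hu2 : Differentiable ℝ (deriv u) := hcd1.differentiable one_ne_zero
  have hu'cont : Continuous (deriv u) := hcd1.continuous
  have hucont : Continuous u := hu1.continuous
  -- the base point
  set a : ℝ := max s₀ 0 + 1 with ha_def
  have ha0 : (0:ℝ) < a := by
    have : (0:ℝ) ≤ max s₀ 0 := le_max_right _ _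
    simp only [ha_def]; linarith
  have ha1 : (1:ℝ) ≤ a := by
    have : (0:ℝ) ≤ max s₀ 0 := le_max_right _ _
    simp only [ha_def]; linarith
  have has : s₀ < a := by
    have : s₀ ≤ max s₀ 0 := le_max_left _ _
    simp only [ha_def]; linarith
  have huposa : ∀ τ, a ≤ τ → 0 < u τ := fun τ hτ => hupos τ (lt_of_lt_of_le has hτ)
  have hWposa : ∀ τ, a ≤ τ → 0 < W τ := fun τ hτ => hWpos τ (lt_of_lt_of_le ha0 hτ)
  set ψ : ℝ → ℝ := fun τ => W τ * u τ with hψ_def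
  have hψnn : ∀ τ, a ≤ τ → 0 ≤ ψ τ := fun τ hτ =>
    le_of_lt (mul_pos (hWposa τ hτ) (huposa τ hτ))
  have hψcont : ContinuousOn ψ (Ioi 0) := hWc.mul hucont.continuousOn
  -- FTC for deriv u on [a, ∞)
  have hderiv_eq : ∀ b c : ℝ, a ≤ b → a ≤ c →
      deriv u c - deriv u b = ∫ x in b..c, -ψ x := by
    intro b c hb hc
    have hsub : uIcc b c ⊆ Ioi (0:ℝ) := by
      intro x hx
      have := hx.1
      have hm : min b c ≤ x := hx.1
      have : a ≤ min b c := le_min hb hc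
      exact lt_of_lt_of_le ha0 (le_trans this hm)
    have h1 : ∫ x in b..c, deriv (deriv u) x = deriv u c - deriv u b :=
      intervalIntegral.integral_deriv_eq_sub (fun x _ => hu2 x)
        ((hcd1.continuous_deriv le_rfl).intervalIntegrable _ _)
    rw [← h1]
    apply intervalIntegral.integral_congr
    intro x hx
    have hx0 : 0 < x := hsub hx
    have := hode x hx0
    simp only [hψ_def]
    linarith
  -- deriv u is antitone on [a, ∞)
  have hmono : ∀ b c : ℝ, a ≤ b → b ≤ c → deriv u c ≤ deriv u b := by
    intro b c hb hbc
    have h := hderiv_eq b c hb (le_trans hb hbc)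
    have h2 : 0 ≤ ∫ x in b..c, ψ x :=
      intervalIntegral.integral_nonneg hbc (fun x hx => hψnn x (le_trans hb hx.1))
    rw [intervalIntegral.integral_neg] at h
    linarith
  -- u c - u b = ∫ deriv u
  have hu_sub : ∀ b c : ℝ, u c - u b = ∫ x in b..c, deriv u x := by
    intro b c
    rw [intervalIntegral.integral_deriv_eq_sub (fun x _ => hu1 x)
      (hu'cont.intervalIntegrable _ _)]
  -- deriv u ≥ 0 on [a, ∞)
  have hu'nonneg : ∀ b, a ≤ b → 0 ≤ deriv u b := by
    intro b hb
    by_contra hneg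
    push_neg at hneg
    set d := deriv u b with hd_def
    set t := b + u b / (-d) + 1 with ht_def
    have hub : 0 < u b := huposa b hb
    have hfrac : 0 < u b / (-d) := div_pos hub (by linarith)
    have hbt : b ≤ t := by simp only [ht_def]; linarith
    have h1 : u t - u b = ∫ x in b..t, deriv u x := hu_sub b t
    have h2 : ∫ x in b..t, deriv u x ≤ ∫ _x in b..t, d := by
      apply intervalIntegral.integral_mono_on hbt
        (hu'cont.intervalIntegrable _ _) (intervalIntegrable_const)
      intro x hx
      exact hmono b x hb hx.1
    rw [intervalIntegral.integral_const, smul_eq_mul] at h2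
    have hts : t - b = u b / (-d) + 1 := by simp only [ht_def]; ring
    have hd0 : d ≠ 0 := ne_of_lt hneg
    have hcancel : u b / (-d) * d = -u b := by
      rw [div_mul_eq_mul_div, mul_div_assoc, div_neg, div_self hd0]
      ring
    have h3 : (t - b) * d = -u b + d := by
      rw [hts, add_mul, one_mul, hcancel]
    have hut : 0 < u t := huposa t (le_trans hb hbt)
    linarith
  -- linear upper bound for u
  set K : ℝ := u a + deriv u a with hK_def
  have hK0 : 0 < K := by
    have := huposa a le_rfl
    have := hu'nonneg a le_rfl
    simp only [hK_def]; linarith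
  have hu_le : ∀ τ, a ≤ τ → u τ ≤ K * (1 + τ) := by
    intro τ hτ
    have h1 : u τ - u a = ∫ x in a..τ, deriv u x := hu_sub a τ
    have h2 : ∫ x in a..τ, deriv u x ≤ ∫ _x in a..τ, deriv u a := by
      apply intervalIntegral.integral_mono_on hτ
        (hu'cont.intervalIntegrable _ _) (intervalIntegrable_const)
      intro x hx
      exact hmono a x le_rfl hx.1
    rw [intervalIntegral.integral_const, smul_eq_mul] at h2
    have hua : 0 < u a := huposa a le_rfl
    have hu'a : 0 ≤ deriv u a := hu'nonneg a le_rfl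
    simp only [hK_def]
    nlinarith
  -- integrability facts
  have hg_int : ∀ s : ℝ, 0 ≤ s → IntegrableOn (fun τ => (1 + τ)^2 * W τ) (Ioi s) := by
    intro s hs
    exact hWint.mono_set (Ioi_subset_Ioi hs)
  have hh_int : ∀ s : ℝ, 0 ≤ s → IntegrableOn (fun τ => (1 + τ) * W τ) (Ioi s) := by
    intro s hs
    refine Integrable.mono' (hg_int s hs) ?_ ?_
    · exact ((continuousOn_const.add continuousOn_id).mul
        (hWc.mono (Ioi_subset_Ioi hs))).aestronglyMeasurable measurableSet_Ioi
    · filter_upwards [ae_restrict_mem measurableSet_Ioi] with τ hτ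
      have hτ0 : 0 < τ := lt_of_le_of_lt hs hτ
      have hW : 0 ≤ W τ := le_of_lt (hWpos τ hτ0)
      rw [Real.norm_eq_abs, abs_of_nonneg (by nlinarith)]
      nlinarith [mul_nonneg (mul_nonneg (by linarith : (0:ℝ) ≤ 1 + τ) hW) (le_of_lt hτ0)]
  have hψ_int : ∀ s : ℝ, a ≤ s → IntegrableOn ψ (Ioi s) := by
    intro s hs
    have hs0 : (0:ℝ) ≤ s := le_trans (le_of_lt ha0) hs
    refine Integrable.mono' ((hg_int s hs0).const_mul K) ?_ ?_
    · exact (hψcont.mono (Ioi_subset_Ioi hs0)).aestronglyMeasurable measurableSet_Ioi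
    · filter_upwards [ae_restrict_mem measurableSet_Ioi] with τ hτ
      have hτa : a ≤ τ := le_trans hs (le_of_lt hτ)
      have hule := hu_le τ hτa
      have hW : 0 ≤ W τ := le_of_lt (hWposa τ hτa)
      have h1 : (1:ℝ) ≤ 1 + τ := by linarith [le_trans ha1 hτa]
      rw [Real.norm_eq_abs, abs_of_nonneg (hψnn τ hτa)]
      simp only [hψ_def]
      nlinarith [mul_le_mul_of_nonneg_left hule hW,
        mul_nonneg (mul_nonneg (le_of_lt hK0) hW)
          (mul_nonneg (by linarith : (0:ℝ) ≤ 1 + τ) (by linarith : (0:ℝ) ≤ τ))]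
  have hτψ_int : ∀ s : ℝ, a ≤ s → IntegrableOn (fun τ => τ * ψ τ) (Ioi s) := by
    intro s hs
    have hs0 : (0:ℝ) ≤ s := le_trans (le_of_lt ha0) hs
    refine Integrable.mono' ((hg_int s hs0).const_mul K) ?_ ?_
    · exact ((continuousOn_id.mul (hψcont.mono (Ioi_subset_Ioi hs0)))).aestronglyMeasurable
        measurableSet_Ioi
    · filter_upwards [ae_restrict_mem measurableSet_Ioi] with τ hτ
      have hτa : a ≤ τ := le_trans hs (le_of_lt hτ)
      have hule := hu_le τ hτa
      have hW : 0 ≤ W τ := le_of_lt (hWposa τ hτa)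
      have hψτ : 0 ≤ ψ τ := hψnn τ hτa
      have hτ0 : 0 ≤ τ := le_trans (le_of_lt ha0) hτa
      have h1 : (1:ℝ) ≤ 1 + τ := by linarith
      rw [Real.norm_eq_abs, abs_of_nonneg (mul_nonneg hτ0 hψτ)]
      simp only [hψ_def]
      nlinarith [mul_le_mul_of_nonneg_left hule (mul_nonneg hτ0 hW),
        mul_nonneg (mul_nonneg (le_of_lt hK0) hW) (by linarith : (0:ℝ) ≤ 1 + τ)]
  -- tail integrals
  set B : ℝ → ℝ := fun s => ∫ τ in Ioi s, ψ τ with hB_def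
  set A : ℝ → ℝ := fun s => ∫ τ in Ioi s, τ * ψ τ with hA_def
  -- decomposition
  have hdecomp : ∀ (f : ℝ → ℝ), IntegrableOn f (Ioi a) → ∀ s, a ≤ s →
      ∫ τ in Ioi s, f τ = (∫ τ in Ioi a, f τ) - ∫ x in a..s, f x := by
    intro f hf s hs
    rw [intervalIntegral.integral_of_le hs]
    have hunion : Ioc a s ∪ Ioi s = Ioi a := Ioc_union_Ioi_eq_Ioi hs
    have := setIntegral_union (Ioc_disjoint_Ioi le_rfl) measurableSet_Ioi
      (hf.mono_set (by rw [← hunion]; exact subset_union_left))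
      (hf.mono_set (by rw [← hunion]; exact subset_union_right))
    rw [hunion] at this
    linarith
  have hBeq : ∀ s, a ≤ s → B s = B a - ∫ x in a..s, ψ x :=
    fun s hs => hdecomp ψ (hψ_int a le_rfl) s hs
  have hAeq : ∀ s, a ≤ s → A s = A a - ∫ x in a..s, x * ψ x :=
    fun s hs => hdecomp _ (hτψ_int a le_rfl) s hs
  have hBnn : ∀ s, a ≤ s → 0 ≤ B s := by
    intro s hs
    apply setIntegral_nonneg measurableSet_Ioi
    intro τ hτ
    exact hψnn τ (le_trans hs (le_of_lt hτ))
  -- C₁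
  set C₁ : ℝ := deriv u a - B a with hC₁_def
  have hu'B : ∀ s, a ≤ s → deriv u s = C₁ + B s := by
    intro s hs
    have h1 := hderiv_eq a s le_rfl hs
    have h2 := hBeq s hs
    rw [intervalIntegral.integral_neg] at h1
    simp only [hC₁_def]
    linarith
  -- B tends to zero
  have hBtend : Tendsto B atTop (𝓝 0) := by
    have h1 : Tendsto (fun s => ∫ x in a..s, ψ x) atTop (𝓝 (B a)) :=
      intervalIntegral_tendsto_integral_Ioi a (hψ_int a le_rfl) tendsto_id
    have h2 : Tendsto (fun s => B a - ∫ x in a..s, ψ x) atTop (𝓝 (B a - B a)) :=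
      tendsto_const_nhds.sub h1
    rw [sub_self] at h2
    apply h2.congr'
    filter_upwards [eventually_ge_atTop a] with s hs
    exact (hBeq s hs).symm
  have hC₁nn : 0 ≤ C₁ := by
    have h1 : Tendsto (fun s => C₁ + B s) atTop (𝓝 (C₁ + 0)) :=
      tendsto_const_nhds.add hBtend
    rw [add_zero] at h1
    apply ge_of_tendsto h1
    filter_upwards [eventually_ge_atTop a] with s hs
    rw [← hu'B s hs]
    exact hu'nonneg s hs
  -- second big-O bound
  have hB_le : ∀ s, a ≤ s → B s ≤ K * ∫ τ in Ioi s, (1 + τ) * W τ := by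
    intro s hs
    have hs0 : (0:ℝ) ≤ s := le_trans (le_of_lt ha0) hs
    rw [← integral_const_mul]
    apply setIntegral_mono_on (hψ_int s hs) ((hh_int s hs0).const_mul K) measurableSet_Ioi
    intro τ hτ
    have hτa : a ≤ τ := le_trans hs (le_of_lt hτ)
    have hule := hu_le τ hτa
    have hW : 0 ≤ W τ := le_of_lt (hWposa τ hτa)
    simp only [hψ_def]
    nlinarith [mul_le_mul_of_nonneg_left hule hW]
  -- positivity of tails
  have hh_nn : ∀ s, 0 < s → 0 ≤ ∫ τ in Ioi s, (1 + τ) * W τ := by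
    intro s hs
    apply setIntegral_nonneg measurableSet_Ioi
    intro τ hτ
    have hτ0 : 0 < τ := lt_trans hs hτ
    have := hWpos τ hτ0
    nlinarith
  have hg_nn : ∀ s, 0 < s → 0 ≤ ∫ τ in Ioi s, (1 + τ)^2 * W τ := by
    intro s hs
    apply setIntegral_nonneg measurableSet_Ioi
    intro τ hτ
    have hτ0 : 0 < τ := lt_trans hs hτ
    have := hWpos τ hτ0
    nlinarith
  -- derivatives of A and B
  have hIoi_nhds : ∀ s : ℝ, a < s → Ioi a ∈ 𝓝 s := fun s hs => Ioi_mem_nhds hs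
  have hB' : ∀ s : ℝ, a < s → HasDerivAt B (-ψ s) s := by
    intro s hs
    have hs0 : (0:ℝ) < s := lt_trans ha0 hs
    have hci : IntervalIntegrable ψ volume a s := by
      apply ContinuousOn.intervalIntegrable
      apply hψcont.mono
      intro x hx
      have : min a s ≤ x := hx.1
      have : a ≤ x := le_trans (le_min le_rfl (le_of_lt hs)) this
      exact lt_of_lt_of_le ha0 this
    have hd : HasDerivAt (fun t => ∫ x in a..t, ψ x) (ψ s) s :=
      intervalIntegral.integral_hasDerivAt_right hci
        (hψcont.stronglyMeasurableAtFilter isOpen_Ioi s hs0)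
        ((hψcont.continuousAt (Ioi_mem_nhds hs0)))
    have hd2 : HasDerivAt (fun t => B a - ∫ x in a..t, ψ x) (-ψ s) s :=
      (hd.const_sub (B a))
    apply hd2.congr_of_eventuallyEq
    filter_upwards [hIoi_nhds s hs] with t ht
    exact hBeq t (le_of_lt ht)
  have hA' : ∀ s : ℝ, a < s → HasDerivAt A (-(s * ψ s)) s := by
    intro s hs
    have hs0 : (0:ℝ) < s := lt_trans ha0 hs
    have hcont : ContinuousOn (fun τ => τ * ψ τ) (Ioi 0) := continuousOn_id.mul hψcont
    have hci : IntervalIntegrable (fun τ => τ * ψ τ) volume a s := by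
      apply ContinuousOn.intervalIntegrable
      apply hcont.mono
      intro x hx
      have : min a s ≤ x := hx.1
      have : a ≤ x := le_trans (le_min le_rfl (le_of_lt hs)) this
      exact lt_of_lt_of_le ha0 this
    have hd : HasDerivAt (fun t => ∫ x in a..t, x * ψ x) (s * ψ s) s :=
      intervalIntegral.integral_hasDerivAt_right hci
        (hcont.stronglyMeasurableAtFilter isOpen_Ioi s hs0)
        ((hcont.continuousAt (Ioi_mem_nhds hs0)))
    have hd2 : HasDerivAt (fun t => A a - ∫ x in a..t, x * ψ x) (-(s * ψ s)) s :=
      (hd.const_sub (A a))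
    apply hd2.congr_of_eventuallyEq
    filter_upwards [hIoi_nhds s hs] with t ht
    exact hAeq t (le_of_lt ht)
  -- the conserved quantity
  set H : ℝ → ℝ := fun s => (u s - C₁ * s) + (A s - s * B s) with hH_def
  have hH' : ∀ s : ℝ, a < s → HasDerivAt H 0 s := by
    intro s hs
    have h1 : HasDerivAt (fun t => u t - C₁ * t) (deriv u s - C₁) s := by
      have := ((hu1 s).hasDerivAt).sub ((hasDerivAt_id s).const_mul C₁)
      rw [mul_one] at this; exact this
    have h2 : HasDerivAt (fun t => t * B t) (1 * B s + s * (-ψ s)) s :=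
      (hasDerivAt_id s).mul (hB' s hs)
    have h3 : HasDerivAt (fun t => A t - t * B t) (-(s * ψ s) - (1 * B s + s * (-ψ s))) s :=
      (hA' s hs).sub h2
    have h4 := h1.add h3
    have heq : deriv u s - C₁ + (-(s * ψ s) - (1 * B s + s * (-ψ s))) = 0 := by
      linear_combination hu'B s (le_of_lt hs)
    rw [heq] at h4
    exact h4
  set C₀ : ℝ := H (a + 1) with hC₀_def
  have hHconst : ∀ s, a + 1 ≤ s → H s = C₀ := by
    intro s hs
    have h1 : ∫ x in (a+1)..s, (0:ℝ) = H s - H (a + 1) := by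
      apply intervalIntegral.integral_eq_sub_of_hasDerivAt
      · intro t ht
        rw [uIcc_of_le hs] at ht
        exact hH' t (lt_of_lt_of_le (by linarith) ht.1)
      · exact intervalIntegrable_const
    rw [intervalIntegral.integral_zero] at h1
    simp only [hC₀_def]
    linarith
  -- F identity
  have hF_eq : ∀ s, a ≤ s → A s - s * B s = ∫ τ in Ioi s, (τ - s) * ψ τ := by
    intro s hs
    rw [← integral_const_mul]
    rw [← integral_sub (hτψ_int s hs) ((hψ_int s hs).const_mul s)]
    congr 1
    ext τ
    ring
  have hF_le : ∀ s, a ≤ s → A s - s * B s ≤ K * ∫ τ in Ioi s, (1 + τ)^2 * W τ := by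
    intro s hs
    have hs0 : (0:ℝ) ≤ s := le_trans (le_of_lt ha0) hs
    rw [hF_eq s hs, ← integral_const_mul]
    have hFint : IntegrableOn (fun τ => (τ - s) * ψ τ) (Ioi s) := by
      refine ((hτψ_int s hs).sub ((hψ_int s hs).const_mul s)).congr ?_
      exact ae_of_all _ (fun τ => by simp [Pi.sub_apply]; ring)
    apply setIntegral_mono_on hFint ((hg_int s hs0).const_mul K) measurableSet_Ioi
    intro τ hτ
    have hτa : a ≤ τ := le_trans hs (le_of_lt hτ)
    have hule := hu_le τ hτa
    have hW : 0 ≤ W τ := le_of_lt (hWposa τ hτa)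
    have hψτ : 0 ≤ ψ τ := hψnn τ hτa
    have hτs : s ≤ τ := le_of_lt hτ
    simp only [hψ_def]
    have hb1 : (τ - s) * (W τ * u τ) ≤ (1 + τ) * (W τ * u τ) :=
      mul_le_mul_of_nonneg_right (by linarith) (by nlinarith [huposa τ hτa])
    have hb2 : (1 + τ) * (W τ * u τ) ≤ (1 + τ) * (W τ * (K * (1 + τ))) :=
      mul_le_mul_of_nonneg_left (mul_le_mul_of_nonneg_left hule hW) (by linarith)
    nlinarith [hb1, hb2]
  have hF_nn : ∀ s, a ≤ s → 0 ≤ A s - s * B s := by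
    intro s hs
    rw [hF_eq s hs]
    apply setIntegral_nonneg measurableSet_Ioi
    intro τ hτ
    have hτa : a ≤ τ := le_trans hs (le_of_lt hτ)
    exact mul_nonneg (by linarith [le_of_lt (mem_Ioi.mp hτ)] : (0:ℝ) ≤ τ - s) (hψnn τ hτa)
  -- conclude
  refine ⟨C₀, C₁, hC₁nn, ?_, ?_⟩
  · rw [isBigO_iff]
    refine ⟨K, ?_⟩
    filter_upwards [eventually_ge_atTop (a + 1)] with s hs
    have hsa : a ≤ s := by linarith
    have hs0 : (0:ℝ) < s := lt_of_lt_of_le ha0 hsa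
    have hHs := hHconst s hs
    have heq : u s - (C₀ + C₁ * s) = -(A s - s * B s) := by
      simp only [hH_def] at hHs
      linarith
    rw [heq, Real.norm_eq_abs, Real.norm_eq_abs, abs_neg,
      abs_of_nonneg (hF_nn s hsa), abs_of_nonneg (hg_nn s hs0)]
    exact hF_le s hsa
  · rw [isBigO_iff]
    refine ⟨K, ?_⟩
    filter_upwards [eventually_ge_atTop a] with s hs
    have hs0 : (0:ℝ) < s := lt_of_lt_of_le ha0 hs
    have heq : deriv u s - C₁ = B s := by
      have := hu'B s hs
      linarith
    rw [heq, Real.norm_eq_abs, Real.norm_eq_abs,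
      abs_of_nonneg (hBnn s hs), abs_of_nonneg (hh_nn s hs0)]
    exact hB_le s hs
end

section
/- Let W : (0,∞) → ℝ be continuous with W(s) > 0 and ∫₀^∞ (1+s) W(s) ds < ∞. If u ∈ C² solves u'' + W·u = 0 and there exists s₀ > 0 with u(s) > 0 for all s > s₀, then there is a constant C with 0 < u(s) ≤ C(1+s) for s > s₀, and the limit lim_{s→∞} u'(s) exists. -/
open MeasureTheory Set Filter Topology

theorem stmt2 (W u : ℝ → ℝ) (s₀ : ℝ)
    (hWc : ContinuousOn W (Ioi 0)) (hWpos : ∀ s > (0:ℝ), 0 < W s)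
    (hWint : IntegrableOn (fun s => (1 + s) * W s) (Ioi 0))
    (hu : ContDiff ℝ 2 u)
    (hode : ∀ s > (0:ℝ), deriv (deriv u) s + W s * u s = 0)
    (hs₀ : 0 < s₀) (hupos : ∀ s > s₀, 0 < u s) :
    (∃ C : ℝ, ∀ s > s₀, 0 < u s ∧ u s ≤ C * (1 + s)) ∧
      ∃ L : ℝ, Tendsto (deriv u) atTop (𝓝 L) := by
  have hdu : Differentiable ℝ u := hu.differentiable (by norm_num)
  have hu2 : ContDiff ℝ ((1:ℕ)+1) u := by exact_mod_cast hu
  have hdu' : Differentiable ℝ (deriv u) :=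
    (contDiff_succ_iff_deriv.mp hu2).2.2.differentiable (by simp)
  -- deriv u is strictly antitone on Ici s₀
  have hneg : ∀ s ∈ interior (Ici s₀), deriv (deriv u) s < 0 := by
    intro s hs
    rw [interior_Ici] at hs
    have hs0 : (0:ℝ) < s := lt_trans hs₀ hs
    have := hode s hs0
    nlinarith [hWpos s hs0, hupos s hs]
  have hanti : StrictAntiOn (deriv u) (Ici s₀) :=
    strictAntiOn_of_deriv_neg (convex_Ici s₀) hdu'.continuous.continuousOn hneg
  -- tangent line bound from concavity
  have key : ∀ a b, s₀ < a → a < b → u b ≤ u a + deriv u a * (b - a) := by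
    intro a b ha hab
    obtain ⟨c, hc, hcd⟩ := exists_hasDerivAt_eq_slope u (deriv u) hab
      hdu.continuous.continuousOn (fun x _ => (hdu x).hasDerivAt)
    have hle : deriv u c ≤ deriv u a :=
      le_of_lt (hanti (le_of_lt ha) (le_of_lt (lt_trans ha hc.1)) hc.1)
    have hba : b - a ≠ 0 := ne_of_gt (sub_pos.mpr hab)
    rw [eq_div_iff hba] at hcd
    have hub : u b - u a = deriv u c * (b - a) := by linarith
    nlinarith [sub_pos.mpr hab]
  -- deriv u ≥ 0 on (s₀, ∞)
  have hd0 : ∀ s > s₀, 0 ≤ deriv u s := by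
    intro s hs
    by_contra h
    push_neg at h
    set d := deriv u s with hd
    have hus : 0 < u s := hupos s hs
    have hb : s < s + (u s / (-d) + 1) := by
      have : 0 < u s / (-d) := div_pos hus (neg_pos.mpr h)
      linarith
    have hk := key s _ hs hb
    have hdne : d ≠ 0 := ne_of_lt h
    have hid : d * (u s / (-d)) = - u s := by
      field_simp
    have hup := hupos _ (lt_trans hs hb)
    nlinarith
  constructor
  · -- linear bound
    set s₁ := s₀ + 1 with hs₁
    have hs₀₁ : s₀ < s₁ := by simp [hs₁]
    obtain ⟨x₀, hx₀, hmax⟩ := (isCompact_Icc (a := s₀) (b := s₁)).exists_isMaxOn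
      ⟨s₀, left_mem_Icc.mpr (by linarith)⟩ hdu.continuous.continuousOn
    have hmax' : ∀ y ∈ Icc s₀ s₁, u y ≤ u x₀ := hmax
    have hu1 : 0 < u s₁ := hupos s₁ hs₀₁
    have hx₀pos : 0 < u x₀ := lt_of_lt_of_le hu1 (hmax' s₁ ⟨by linarith, le_rfl⟩)
    have hd1 : 0 ≤ deriv u s₁ := hd0 s₁ hs₀₁
    refine ⟨max (u x₀) (u s₁ + deriv u s₁), fun s hs => ⟨hupos s hs, ?_⟩⟩
    have hC1 : u x₀ ≤ max (u x₀) (u s₁ + deriv u s₁) := le_max_left _ _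
    have hC2 : u s₁ + deriv u s₁ ≤ max (u x₀) (u s₁ + deriv u s₁) := le_max_right _ _
    rcases le_or_gt s s₁ with hcase | hcase
    · have h1 : u s ≤ u x₀ := hmax' s ⟨le_of_lt hs, hcase⟩
      nlinarith
    · have hk := key s₁ s hs₀₁ hcase
      have h1 : s - s₁ ≤ 1 + s := by linarith
      nlinarith
  · -- limit of deriv u
    set g := fun s => deriv u (max s (s₀ + 1)) with hg
    have hganti : Antitone g := by
      intro a b hab
      rcases eq_or_lt_of_le (max_le_max_right (s₀+1) hab) with heq | hlt
      · simp [hg, heq]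
      · exact le_of_lt (hanti (le_trans (by linarith) (le_max_right a (s₀+1)))
          (le_trans (by linarith) (le_max_right b (s₀+1))) hlt)
    have hbdd : BddBelow (Set.range g) := by
      refine ⟨0, ?_⟩
      rintro x ⟨s, rfl⟩
      exact hd0 _ (lt_of_lt_of_le (by linarith) (le_max_right s (s₀+1)))
    have htend : Tendsto g atTop (𝓝 (⨅ s, g s)) := tendsto_atTop_ciInf hganti hbdd
    refine ⟨⨅ s, g s, htend.congr' ?_⟩
    filter_upwards [eventually_ge_atTop (s₀ + 1)] with s hs
    simp [hg, max_eq_left hs]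
end

section
/- Let g : [0,∞) → ℝ satisfy g''(r) = r^M for 0 ≤ r < M², with g(0) = g'(0) = 0, so that g(r) = r^{M+2}/((M+2)(M+1)) and G(r) := ∫₀^r g(τ)dτ = r^{M+3}/((M+3)(M+2)(M+1)) on [0,M²). Suppose W ∈ C¹(0,∞) is positive decreasing with |W(r)| + |W'(r)| ≤ C* e^{-ε₀ r}. Then there exists M* = M*(C*, ε₀) such that for all M ≥ M* and all r ∈ (0, M²): 2g(r)W(r) + G(r)W'(r) + g''(r)/2 ≥ 2 g(r) W(r). -/
open Set Real

theorem stmt8 (W : ℝ → ℝ) (Cs ε₀ : ℝ) (hCs : 0 < Cs) (hε : 0 < ε₀)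
    (hW1 : ContDiffOn ℝ 1 W (Ioi 0)) (hWpos : ∀ r > (0:ℝ), 0 < W r)
    (hWdec : ∀ r s : ℝ, 0 < r → r ≤ s → W s ≤ W r)
    (hWb : ∀ r > (0:ℝ), |W r| + |deriv W r| ≤ Cs * Real.exp (-ε₀ * r)) :
    ∃ Mstar : ℝ, ∀ M ≥ Mstar, ∀ r ∈ Ioo (0:ℝ) (M^2),
      2 * (r ^ (M+2) / ((M+2) * (M+1))) * W r
        + (r ^ (M+3) / ((M+3) * (M+2) * (M+1))) * deriv W r + r ^ M / 2
      ≥ 2 * (r ^ (M+2) / ((M+2) * (M+1))) * W r := by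
  refine ⟨max 1 (2 * Cs * (27 / ε₀ ^ 3)), fun M hM r hr => ?_⟩
  obtain ⟨hr0, hrM⟩ := hr
  have hM1 : (1:ℝ) ≤ M := le_trans (le_max_left _ _) hM
  have hC : 2 * Cs * (27 / ε₀ ^ 3) ≤ M := le_trans (le_max_right _ _) hM
  have hP : 0 < r ^ M := Real.rpow_pos_of_pos hr0 M
  have hD : 0 < (M+3) * (M+2) * (M+1) := by nlinarith
  -- split r^(M+3)
  have hsplit : r ^ (M+3) = r ^ M * r ^ (3:ℕ) := by
    rw [Real.rpow_add hr0, ← Real.rpow_natCast r 3]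
    norm_num
  -- derivative lower bound
  have h1 : -(Cs * Real.exp (-ε₀ * r)) ≤ deriv W r := by
    have := hWb r hr0
    have h2 := abs_nonneg (W r)
    have h3 := neg_abs_le (deriv W r)
    linarith
  -- exponential bound
  have hexp : ε₀ ^ 3 * r ^ 3 / 27 ≤ Real.exp (ε₀ * r) := by
    have h := Real.add_one_le_exp (ε₀ * r / 3)
    have h0 : 0 ≤ ε₀ * r / 3 := by positivity
    calc ε₀ ^ 3 * r ^ 3 / 27 = (ε₀ * r / 3) ^ 3 := by ring
      _ ≤ (ε₀ * r / 3 + 1) ^ 3 := by nlinarith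
      _ ≤ (Real.exp (ε₀ * r / 3)) ^ 3 := by gcongr
      _ = Real.exp (ε₀ * r) := by
          rw [← Real.exp_nat_mul]
          ring_nf
  have h2 : r ^ 3 * Real.exp (-ε₀ * r) ≤ 27 / ε₀ ^ 3 := by
    have hE : Real.exp (-ε₀ * r) * Real.exp (ε₀ * r) = 1 := by
      rw [← Real.exp_add, show -ε₀ * r + ε₀ * r = 0 by ring, Real.exp_zero]
    have hEp : (0:ℝ) < Real.exp (-ε₀ * r) := Real.exp_pos _
    rw [le_div_iff₀ (by positivity)]
    nlinarith [mul_le_mul_of_nonneg_left hexp hEp.le]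
  -- main bound
  have hr3 : (0:ℝ) < r ^ 3 := by positivity
  have main : 0 ≤ r ^ 3 * deriv W r + ((M+3) * (M+2) * (M+1)) / 2 := by
    have hA := mul_le_mul_of_nonneg_left h1 hr3.le
    have hB := mul_le_mul_of_nonneg_left h2 hCs.le
    nlinarith
  have key : 0 ≤ (r ^ (M+3) / ((M+3) * (M+2) * (M+1))) * deriv W r + r ^ M / 2 := by
    have heq : (r ^ M * r ^ (3:ℕ) / ((M+3) * (M+2) * (M+1))) * deriv W r + r ^ M / 2
        = r ^ M * (r ^ (3:ℕ) * deriv W r + ((M+3) * (M+2) * (M+1)) / 2)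
            / ((M+3) * (M+2) * (M+1)) := by
      field_simp
    rw [hsplit, heq]
    exact div_nonneg (mul_nonneg hP.le main) hD.le
  linarith
end

section
/- With g defined by g''(r) = r^M for 0 ≤ r < M² and g''(r) = e^{-δ r} for r > M² (δ = ε₀/2, g(0)=g'(0)=0), and W ∈ C¹ positive decreasing with |W(r)|+|W'(r)| ≤ C* e^{-ε₀ r}, there exists M* = M*(C*, ε₀) such that for all M ≥ M* and all r > M²: |2g(r)W(r) + G(r)W'(r) + g''(r)/2| ≤ 2 e^{-ε₀ r/2}, where G(r) = ∫₀^r g. -/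
open Set Real intervalIntegral

set_option maxHeartbeats 1000000

private lemma aux_he {Cs δ M : ℝ} (hCs : 0 < Cs) (hδ : 0 < δ) (hMpos : 0 < M)
    (hMsq : 2^16 * Cs / δ^5 ≤ M^2) : 8 / (δ * M^2) ≤ δ^4/(8192*Cs) := by
  rw [div_le_div_iff₀ (by positivity) (by positivity)]
  have h7 := (div_le_iff₀ (by positivity : (0:ℝ) < δ^5)).mp hMsq
  nlinarith [h7]

private lemma exp_ge_quartic {x : ℝ} (hx : 0 ≤ x) : (x/4)^4 ≤ Real.exp x := by
  have h1 : x/4 ≤ Real.exp (x/4) := by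
    have := Real.add_one_le_exp (x/4); linarith
  calc (x/4)^4 ≤ Real.exp (x/4) ^ 4 := by
        apply pow_le_pow_left₀ (by linarith) h1
    _ = Real.exp x := by
        rw [← Real.exp_nat_mul]; congr 1; push_cast; ring

theorem stmt9 (W : ℝ → ℝ) (Cs ε₀ : ℝ) (hCs : 0 < Cs) (hε : 0 < ε₀)
    (hW1 : ContDiffOn ℝ 1 W (Ioi 0)) (hWpos : ∀ r > (0:ℝ), 0 < W r)
    (hWdec : ∀ r s : ℝ, 0 < r → r ≤ s → W s ≤ W r)
    (hWb : ∀ r > (0:ℝ), |W r| + |deriv W r| ≤ Cs * Real.exp (-ε₀ * r)) :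
    ∃ Mstar : ℝ, ∀ M ≥ Mstar, ∀ r > M^2,
      |2 * (∫ τ in (0:ℝ)..r,
              (r - τ) * (if τ < M^2 then τ ^ M else Real.exp (-(ε₀/2) * τ))) * W r
        + (∫ τ in (0:ℝ)..r,
              ((r - τ)^2 / 2) * (if τ < M^2 then τ ^ M else Real.exp (-(ε₀/2) * τ)))
            * deriv W r
        + Real.exp (-(ε₀/2) * r) / 2|
      ≤ 2 * Real.exp (-ε₀ * r / 2) := by
  have hδ : (0:ℝ) < ε₀/2 := by linarith
  refine ⟨max (max 2 (256/(ε₀/2)^2)) (Real.sqrt (2^16 * Cs / (ε₀/2)^5)), ?_⟩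
  intro M hM r hr
  set δ := ε₀/2 with hδdef
  clear_value δ
  have hM1 : (2:ℝ) ≤ M := le_trans (le_trans (le_max_left _ _) (le_max_left _ _)) hM
  have hMpos : 0 < M := by linarith
  have hM2 : 256/δ^2 ≤ M := le_trans (le_trans (le_max_right _ _) (le_max_left _ _)) hM
  have hMs : Real.sqrt (2^16 * Cs / δ^5) ≤ M := le_trans (le_max_right _ _) hM
  have hMsq : 2^16 * Cs / δ^5 ≤ M^2 := by
    have h := pow_le_pow_left₀ (Real.sqrt_nonneg _) hMs 2
    rwa [Real.sq_sqrt (by positivity)] at h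
  have hMsq1 : (1:ℝ) ≤ M^2 := by nlinarith
  have hr0 : (0:ℝ) < r := by nlinarith
  have hr1 : (1:ℝ) ≤ r := by nlinarith
  set K := (M^2) ^ M + 1 with hKdef
  clear_value K
  have hKnn : (0:ℝ) ≤ (M^2) ^ M := Real.rpow_nonneg (by positivity) _
  have hK1 : (1:ℝ) ≤ K := by simp [hKdef]; linarith
  have hKpos : (0:ℝ) < K := by linarith
  -- bound on the ite factor
  have hif : ∀ x ∈ Set.uIoc (0:ℝ) r,
      |(if x < M^2 then x ^ M else Real.exp (-δ * x))| ≤ K := by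
    intro x hx
    rw [Set.uIoc_of_le hr0.le] at hx
    obtain ⟨hx0, hxr⟩ := hx
    split_ifs with h
    · rw [abs_of_nonneg (Real.rpow_nonneg hx0.le _)]
      have h2 := Real.rpow_le_rpow hx0.le h.le (by positivity : (0:ℝ) ≤ M)
      simp only [hKdef]; linarith
    · rw [abs_of_nonneg (Real.exp_nonneg _)]
      have h2 : Real.exp (-δ * x) ≤ 1 := by
        rw [Real.exp_le_one_iff]; nlinarith
      linarith
  have hI1 : |∫ τ in (0:ℝ)..r,
      (r - τ) * (if τ < M^2 then τ ^ M else Real.exp (-δ * τ))| ≤ r^2 * K := by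
    have h := intervalIntegral.norm_integral_le_of_norm_le_const (C := r * K)
      (f := fun τ => (r - τ) * (if τ < M^2 then τ ^ M else Real.exp (-δ * τ)))
      (a := 0) (b := r) ?_
    · rw [Real.norm_eq_abs, sub_zero, abs_of_nonneg hr0.le] at h
      calc _ ≤ r * K * r := h
        _ = r^2 * K := by ring
    · intro x hx
      have hx' := hx
      rw [Set.uIoc_of_le hr0.le] at hx'
      obtain ⟨hx0, hxr⟩ := hx'
      rw [Real.norm_eq_abs, abs_mul]
      have h1 : |r - x| ≤ r := by rw [abs_of_nonneg (by linarith)]; linarith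
      exact mul_le_mul h1 (hif x hx) (abs_nonneg _) hr0.le
  have hI2 : |∫ τ in (0:ℝ)..r,
      ((r - τ)^2 / 2) * (if τ < M^2 then τ ^ M else Real.exp (-δ * τ))| ≤ r^3 * K / 2 := by
    have h := intervalIntegral.norm_integral_le_of_norm_le_const (C := r^2/2 * K)
      (f := fun τ => ((r - τ)^2 / 2) * (if τ < M^2 then τ ^ M else Real.exp (-δ * τ)))
      (a := 0) (b := r) ?_
    · rw [Real.norm_eq_abs, sub_zero, abs_of_nonneg hr0.le] at h
      calc _ ≤ r^2/2 * K * r := h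
        _ = r^3 * K / 2 := by ring
    · intro x hx
      have hx' := hx
      rw [Set.uIoc_of_le hr0.le] at hx'
      obtain ⟨hx0, hxr⟩ := hx'
      rw [Real.norm_eq_abs, abs_mul]
      have h1 : |(r - x)^2 / 2| ≤ r^2/2 := by
        rw [abs_of_nonneg (by positivity)]; nlinarith
      exact mul_le_mul h1 (hif x hx) (abs_nonneg _) (by positivity)
  have hWr : |W r| ≤ Cs * Real.exp (-ε₀ * r) := by
    have h := hWb r hr0; have := abs_nonneg (deriv W r); linarith
  have hWr' : |deriv W r| ≤ Cs * Real.exp (-ε₀ * r) := by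
    have h := hWb r hr0; have := abs_nonneg (W r); linarith
  set F := Real.exp (-ε₀ * r / 4) with hFdef
  clear_value F
  have hFpos : 0 < F := by rw [hFdef]; exact Real.exp_pos _
  have hF2 : Real.exp (-δ * r) = F^2 := by
    rw [hFdef, ← Real.exp_nat_mul]
    congr 1; rw [hδdef]; push_cast; ring
  have hF4 : Real.exp (-ε₀ * r) = F^4 := by
    rw [hFdef, ← Real.exp_nat_mul]
    congr 1; push_cast; ring
  have hFr2 : Real.exp (-ε₀ * r / 2) = F^2 := by
    rw [hFdef, ← Real.exp_nat_mul]
    congr 1; push_cast; ring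
  -- fact1 : r^3 * F ≤ 4096/δ^4
  have hFe : F = Real.exp (-(δ * r / 2)) := by
    rw [hFdef]; congr 1; rw [hδdef]; ring
  have fact1 : r^3 * F ≤ 4096/δ^4 := by
    have hq : (δ*r/2/4)^4 ≤ Real.exp (δ*r/2) := exp_ge_quartic (by positivity)
    have hmul : (δ*r/8)^4 * F ≤ 1 := by
      have h2 : Real.exp (δ*r/2) * Real.exp (-(δ*r/2)) = 1 := by
        rw [← Real.exp_add]; simp
      have h3 := mul_le_mul_of_nonneg_right
        (show (δ*r/8)^4 ≤ Real.exp (δ*r/2) by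
          calc (δ*r/8)^4 = (δ*r/2/4)^4 := by ring
            _ ≤ _ := hq) (Real.exp_nonneg (-(δ*r/2)))
      rw [hFe]; linarith
    have h4 : δ^4 * r^4 * F ≤ 4096 := by nlinarith
    have h34 : r^3 * F ≤ r^4 * F :=
      mul_le_mul_of_nonneg_right (pow_le_pow_right₀ hr1 (by norm_num)) hFpos.le
    rw [le_div_iff₀ (by positivity : (0:ℝ) < δ^4)]
    nlinarith [pow_pos hδ 4]
  -- fact2 : K * F ≤ δ^4/(8192*Cs)
  have fact2 : K * F ≤ δ^4/(8192*Cs) := by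
    have hsqM : (16:ℝ)/δ ≤ Real.sqrt M := by
      have h := Real.sqrt_le_sqrt hM2
      rwa [show (256:ℝ)/δ^2 = (16/δ)^2 by ring, Real.sqrt_sq (by positivity)] at h
    have h16 : (16:ℝ) ≤ δ * Real.sqrt M := by
      rw [div_le_iff₀ hδ] at hsqM; linarith [mul_comm δ (Real.sqrt M)]
    have hsq : Real.sqrt M ^ 2 = M := Real.sq_sqrt hMpos.le
    have hsnn : 0 ≤ Real.sqrt M := Real.sqrt_nonneg M
    have hlog : Real.log M ≤ 2 * Real.sqrt M := by
      have h1 : Real.log (Real.sqrt M) = Real.log M / 2 := Real.log_sqrt hMpos.le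
      have h2 : Real.log (Real.sqrt M) ≤ Real.sqrt M - 1 :=
        Real.log_le_sub_one_of_pos (Real.sqrt_pos.mpr hMpos)
      linarith
    have hb : (M^2) ^ M ≤ Real.exp (δ * M^2 / 4) := by
      rw [Real.rpow_def_of_pos (by positivity : (0:ℝ) < M^2)]
      apply Real.exp_le_exp.mpr
      have hlp : Real.log (M^2) = 2 * Real.log M := by
        rw [Real.log_pow]; push_cast; ring
      rw [hlp]
      have h5 : 2 * Real.log M * M ≤ 4 * Real.sqrt M * M := by nlinarith
      have h6 := mul_le_mul_of_nonneg_right h16 (mul_nonneg hsnn hMpos.le)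
      rw [show δ * Real.sqrt M * (Real.sqrt M * M) = δ * (Real.sqrt M ^ 2) * M by ring,
        hsq] at h6
      nlinarith
    have hFm : F ≤ Real.exp (-(δ * M^2 / 2)) := by
      rw [hFe]; apply Real.exp_le_exp.mpr; nlinarith
    have hc1 : Real.exp (δ * M^2 / 4) * Real.exp (-(δ * M^2 / 2)) =
        Real.exp (-(δ * M^2 / 4)) := by rw [← Real.exp_add]; ring_nf
    have hc2 : Real.exp (-(δ * M^2 / 2)) ≤ Real.exp (-(δ * M^2 / 4)) := by
      apply Real.exp_le_exp.mpr; nlinarith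
    have hKF : K * F ≤ 2 * Real.exp (-(δ * M^2 / 4)) := by
      calc K * F ≤ K * Real.exp (-(δ * M^2 / 2)) :=
            mul_le_mul_of_nonneg_left hFm hKpos.le
        _ = (M^2) ^ M * Real.exp (-(δ * M^2 / 2)) + Real.exp (-(δ * M^2 / 2)) := by
            rw [hKdef]; ring
        _ ≤ Real.exp (δ * M^2 / 4) * Real.exp (-(δ * M^2 / 2)) +
              Real.exp (-(δ * M^2 / 4)) := by
            have := mul_le_mul_of_nonneg_right hb (Real.exp_nonneg (-(δ * M^2 / 2)))
            linarith
        _ = 2 * Real.exp (-(δ * M^2 / 4)) := by rw [hc1]; ring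
    have hd : Real.exp (-(δ * M^2 / 4)) ≤ 4 / (δ * M^2) := by
      have hx : δ * M^2 / 4 ≤ Real.exp (δ * M^2 / 4) := by
        have := Real.add_one_le_exp (δ * M^2 / 4); linarith
      have h2 : Real.exp (δ * M^2 / 4) * Real.exp (-(δ * M^2 / 4)) = 1 := by
        rw [← Real.exp_add]; simp
      rw [le_div_iff₀ (by positivity : (0:ℝ) < δ * M^2)]
      have h3 := mul_le_mul_of_nonneg_left hx (Real.exp_pos (-(δ * M^2 / 4))).le
      nlinarith
    have he : 8 / (δ * M^2) ≤ δ^4/(8192*Cs) := aux_he hCs hδ hMpos hMsq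
    calc K * F ≤ 2 * Real.exp (-(δ * M^2 / 4)) := hKF
      _ ≤ 2 * (4 / (δ * M^2)) := by linarith
      _ = 8 / (δ * M^2) := by ring
      _ ≤ δ^4/(8192*Cs) := he
  -- assemble
  set I1 := ∫ τ in (0:ℝ)..r, (r - τ) * (if τ < M^2 then τ ^ M else Real.exp (-δ * τ))
  set I2 := ∫ τ in (0:ℝ)..r, ((r - τ)^2/2) * (if τ < M^2 then τ ^ M else Real.exp (-δ * τ))
  have htri : |2 * I1 * W r + I2 * deriv W r + Real.exp (-δ * r) / 2| ≤
      2 * |I1| * |W r| + |I2| * |deriv W r| + Real.exp (-δ * r) / 2 := by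
    calc |2 * I1 * W r + I2 * deriv W r + Real.exp (-δ * r) / 2|
        ≤ |2 * I1 * W r + I2 * deriv W r| + |Real.exp (-δ * r) / 2| := abs_add_le _ _
      _ ≤ |2 * I1 * W r| + |I2 * deriv W r| + |Real.exp (-δ * r) / 2| := by
          linarith [abs_add_le (2 * I1 * W r) (I2 * deriv W r)]
      _ = 2 * |I1| * |W r| + |I2| * |deriv W r| + Real.exp (-δ * r) / 2 := by
          rw [abs_mul, abs_mul, abs_mul, abs_of_nonneg (by positivity : (0:ℝ) ≤ (2:ℝ)),
            abs_of_nonneg (by positivity : (0:ℝ) ≤ Real.exp (-δ * r) / 2)]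
  have hstep : 2 * |I1| * |W r| + |I2| * |deriv W r| + Real.exp (-δ * r) / 2 ≤
      2 * (r^2 * K) * (Cs * Real.exp (-ε₀ * r)) +
        (r^3 * K / 2) * (Cs * Real.exp (-ε₀ * r)) + Real.exp (-δ * r) / 2 := by
    gcongr <;> positivity
  have hprod : (r^3 * F) * (K * F) ≤ (4096/δ^4) * (δ^4/(8192*Cs)) :=
    mul_le_mul fact1 fact2 (by positivity) (by positivity)
  have hprod' : (4096/δ^4) * (δ^4/(8192*Cs)) = 1/(2*Cs) := by
    field_simp; ring
  have hfin : 2 * (r^2 * K) * (Cs * F^4) + (r^3 * K / 2) * (Cs * F^4) + F^2 / 2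
      ≤ 2 * F^2 := by
    have h3 : 2 * r^2 + r^3/2 ≤ 3 * r^3 := by nlinarith
    have step2 : (2 * r^2 + r^3/2) * (K * Cs * F^4) ≤ 3 * r^3 * (K * Cs * F^4) :=
      mul_le_mul_of_nonneg_right h3 (by positivity)
    have step4 : 3 * Cs * ((r^3 * F) * (K * F)) * F^2 ≤ 3/2 * F^2 := by
      calc 3 * Cs * ((r^3 * F) * (K * F)) * F^2
          ≤ 3 * Cs * ((4096/δ^4) * (δ^4/(8192*Cs))) * F^2 := by
            apply mul_le_mul_of_nonneg_right _ (by positivity : (0:ℝ) ≤ F^2)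
            exact mul_le_mul_of_nonneg_left hprod (by positivity)
        _ = 3 * Cs * (1/(2*Cs)) * F^2 := by rw [hprod']
        _ = 3/2 * F^2 := by field_simp
    linarith [step2, step4]
  calc |2 * I1 * W r + I2 * deriv W r + Real.exp (-δ * r) / 2|
      ≤ 2 * (r^2 * K) * (Cs * Real.exp (-ε₀ * r)) +
        (r^3 * K / 2) * (Cs * Real.exp (-ε₀ * r)) + Real.exp (-δ * r) / 2 :=
        le_trans htri hstep
    _ ≤ 2 * Real.exp (-ε₀ * r / 2) := by rw [hF4, hF2, hFr2]; exact hfin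
end

section
/- Let u ∈ C([0,∞)) ∩ C²(0,∞) be a real solution of u'' + W u = 0 on (0,∞) with W ∈ C¹ satisfying suitable decay so that u' and W|u|² are square-integrable, and u, u' decay appropriately at infinity. Then for every g ∈ C²([0,∞)) with g(0) = g'(0) = 0, g' → 0 and g'' integrable at infinity, the identity ∫₀^∞ [2 g(r) W(r) + G(r) W'(r) + g''(r)/2] |u(r)|² dr = 0 holds, where G(r) = ∫₀^r g(τ) dτ. -/
open MeasureTheory Set Filter Topology

lemma poly_exp_tendsto (n : ℕ) {b : ℝ} (hb : 0 < b) :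
    Tendsto (fun r : ℝ => r ^ n * Real.exp (-b * r)) atTop (𝓝 0) := by
  have h1 : Tendsto (fun r : ℝ => b * r) atTop atTop :=
    Tendsto.const_mul_atTop hb tendsto_id
  have h2 := (Real.tendsto_pow_mul_exp_neg_atTop_nhds_zero n).comp h1
  have h3 : Tendsto (fun r : ℝ => (1 / b ^ n) * ((b * r) ^ n * Real.exp (-(b * r))))
      atTop (𝓝 ((1 / b ^ n) * 0)) := h2.const_mul _
  rw [mul_zero] at h3
  refine h3.congr fun r => ?_
  field_simp
  ring_nf

lemma sq_le_of_abs_le' {x c : ℝ} (h : |x| ≤ c) : x^2 ≤ c^2 := by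
  nlinarith [abs_nonneg x, sq_abs x]

lemma exp_integral_Ioi {b : ℝ} (hb : 0 < b) (a : ℝ) :
    ∫ s in Ioi a, Real.exp (-b * s) = Real.exp (-b * a) / b := by
  have hderiv : ∀ x ∈ Ioi a, HasDerivAt (fun s => -Real.exp (-b * s) / b)
      (Real.exp (-b * x)) x := by
    intro x _
    have : HasDerivAt (fun s : ℝ => -b * s) (-b) x := by
      simpa using (hasDerivAt_id x).const_mul (-b)
    have h2 := (this.exp).neg.div_const b
    refine h2.congr_deriv ?_
    rw [div_eq_iff hb.ne']; ring
  have hint : IntegrableOn (fun s => Real.exp (-b * s)) (Ioi a) :=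
    exp_neg_integrableOn_Ioi a hb
  have htop : Tendsto (fun s => -Real.exp (-b * s) / b) atTop (𝓝 0) := by
    have : Tendsto (fun s : ℝ => Real.exp (-b * s)) atTop (𝓝 0) := by
      have hmb : Tendsto (fun s : ℝ => -b * s) atTop atBot :=
        Tendsto.const_mul_atTop_of_neg (by linarith) tendsto_id
      exact Real.tendsto_exp_atBot.comp hmb
    have h := (this.neg.div_const b)
    simpa using h
  have := integral_Ioi_of_hasDerivAt_of_tendsto
    (f := fun s => -Real.exp (-b * s) / b) (a := a)
    (Continuous.continuousWithinAt (by continuity)) hderiv hint htop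
  rw [this]; ring

set_option maxHeartbeats 2000000 in
theorem stmt10 (W u g : ℝ → ℝ) (Cs ε₀ : ℝ) (hCs : 0 < Cs) (hε : 0 < ε₀)
    (hW : ContDiffOn ℝ 1 W (Ioi 0))
    (hWb : ∀ r > (0:ℝ), |W r| + |deriv W r| ≤ Cs * Real.exp (-ε₀ * r))
    (huc : ContinuousOn u (Ici 0)) (hu2 : ContDiffOn ℝ 2 u (Ioi 0))
    (hu0 : u 0 = 0)
    (hode : ∀ r > (0:ℝ), deriv (deriv u) r + W r * u r = 0)
    (hub : ∃ C : ℝ, ∀ r ≥ (0:ℝ), |u r| ≤ C)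
    (hu'L2 : IntegrableOn (fun r => (deriv u r)^2) (Ioi 0))
    (hWu2 : IntegrableOn (fun r => |W r| * (u r)^2) (Ioi 0))
    (hu'0 : Tendsto (deriv u) atTop (𝓝 0))
    (hg : ContDiff ℝ 2 g) (hg0 : g 0 = 0) (hg'0 : deriv g 0 = 0)
    (hg' : Tendsto (deriv g) atTop (𝓝 0))
    (hg'' : IntegrableOn (fun r => deriv (deriv g) r) (Ioi 0)) :
    ∫ r in Ioi (0:ℝ),
        (2 * g r * W r + (∫ τ in (0:ℝ)..r, g τ) * deriv W r
          + deriv (deriv g) r / 2) * (u r)^2 = 0 := by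
  -- basic bounds
  obtain ⟨C0, hC0⟩ := hub
  set Cu : ℝ := max C0 0 with hCudef
  have hCu : ∀ r ≥ (0:ℝ), |u r| ≤ Cu := fun r hr => le_trans (hC0 r hr) (le_max_left _ _)
  have hCu0 : 0 ≤ Cu := le_max_right _ _
  -- W bounds
  have hWbd : ∀ r > (0:ℝ), |W r| ≤ Cs * Real.exp (-ε₀ * r) := by
    intro r hr; have := hWb r hr; have := abs_nonneg (deriv W r); linarith
  have hW'bd : ∀ r > (0:ℝ), |deriv W r| ≤ Cs * Real.exp (-ε₀ * r) := by
    intro r hr; have := hWb r hr; have := abs_nonneg (W r); linarith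
  have hexple : ∀ r ≥ (0:ℝ), Real.exp (-ε₀ * r) ≤ 1 := by
    intro r hr
    rw [Real.exp_le_one_iff]
    nlinarith
  -- differentiability of W on Ioi 0
  have hWd : ∀ r > (0:ℝ), HasDerivAt W (deriv W r) r := by
    intro r hr
    exact ((hW.differentiableOn one_ne_zero).differentiableAt (isOpen_Ioi.mem_nhds hr)).hasDerivAt
  have hW'cont : ContinuousOn (deriv W) (Ioi 0) :=
    hW.continuousOn_deriv_of_isOpen isOpen_Ioi le_rfl
  -- differentiability of u on Ioi 0
  have hud : ∀ r > (0:ℝ), HasDerivAt u (deriv u r) r := by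
    intro r hr
    exact ((hu2.differentiableOn (by norm_num)).differentiableAt
      (isOpen_Ioi.mem_nhds hr)).hasDerivAt
  have hu2' : ContDiffOn ℝ 1 (deriv u) (Ioi 0) :=
    hu2.deriv_of_isOpen isOpen_Ioi (by norm_num)
  have hu'd : ∀ r > (0:ℝ), HasDerivAt (deriv u) (deriv (deriv u) r) r := by
    intro r hr
    exact ((hu2'.differentiableOn one_ne_zero).differentiableAt
      (isOpen_Ioi.mem_nhds hr)).hasDerivAt
  have hu'cont : ContinuousOn (deriv u) (Ioi 0) := hu2'.continuousOn
  -- g facts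
  have hg2 : ContDiff ℝ 1 (deriv g) := by
    have h : ContDiff ℝ (1+1 : ℕ) g := by exact_mod_cast hg
    exact (contDiff_succ_iff_deriv.mp (by exact_mod_cast h)).2.2
  have hgd : ∀ r : ℝ, HasDerivAt g (deriv g r) r := fun r =>
    ((hg.differentiable (by norm_num)) r).hasDerivAt
  have hg'd : ∀ r : ℝ, HasDerivAt (deriv g) (deriv (deriv g) r) r := fun r =>
    ((hg2.differentiable one_ne_zero) r).hasDerivAt
  have hg'cont : Continuous (deriv g) := hg2.continuous
  have hg''cont : Continuous (deriv (deriv g)) := hg2.continuous_deriv le_rfl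
  -- decay of u'
  set K : ℝ := Cs * Cu / ε₀ with hKdef
  have hK0 : 0 ≤ K := by positivity
  have hu''eq : ∀ r > (0:ℝ), deriv (deriv u) r = -(W r * u r) := by
    intro r hr; have := hode r hr; linarith
  have hu''cont : ContinuousOn (deriv (deriv u)) (Ioi 0) :=
    hu2'.continuousOn_deriv_of_isOpen isOpen_Ioi le_rfl
  have hu''bd : ∀ r > (0:ℝ), |deriv (deriv u) r| ≤ Cs * Cu * Real.exp (-ε₀ * r) := by
    intro r hr
    rw [hu''eq r hr, abs_neg, abs_mul]
    have h1 := hWbd r hr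
    have h2 := hCu r hr.le
    have := Real.exp_pos (-ε₀ * r)
    have := abs_nonneg (W r)
    have := abs_nonneg (u r)
    nlinarith
  have hu''int : ∀ r > (0:ℝ), IntegrableOn (fun s => deriv (deriv u) s) (Ioi r) := by
    intro r hr
    apply Integrable.mono' (g := fun s => Cs * Cu * Real.exp (-ε₀ * s))
    · exact ((exp_neg_integrableOn_Ioi r hε).const_mul (Cs * Cu))
    · exact (hu''cont.mono (Ioi_subset_Ioi hr.le)).aestronglyMeasurable measurableSet_Ioi
    · refine (ae_restrict_iff' measurableSet_Ioi).mpr (ae_of_all _ fun s hs => ?_)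
      exact hu''bd s (lt_trans hr hs)
  have hu'bd : ∀ r > (0:ℝ), |deriv u r| ≤ K * Real.exp (-ε₀ * r) := by
    intro r hr
    have hFTC := integral_Ioi_of_hasDerivAt_of_tendsto
      (f := deriv u) (f' := fun s => deriv (deriv u) s) (a := r) (m := 0)
      ((hu'cont.continuousAt (isOpen_Ioi.mem_nhds hr)).continuousWithinAt)
      (fun x hx => hu'd x (lt_trans hr hx)) (hu''int r hr) hu'0
    have habs : |deriv u r| = |∫ s in Ioi r, deriv (deriv u) s| := by
      rw [hFTC, zero_sub, abs_neg]
    rw [habs]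
    calc |∫ s in Ioi r, deriv (deriv u) s|
        ≤ ∫ s in Ioi r, |deriv (deriv u) s| := by
          simpa using norm_integral_le_integral_norm (μ := volume.restrict (Ioi r))
            (fun s => deriv (deriv u) s)
      _ ≤ ∫ s in Ioi r, Cs * Cu * Real.exp (-ε₀ * s) := by
          apply setIntegral_mono_on ((hu''int r hr).abs)
            ((exp_neg_integrableOn_Ioi r hε).const_mul (Cs * Cu)) measurableSet_Ioi
          exact fun s hs => hu''bd s (lt_trans hr hs)
      _ = K * Real.exp (-ε₀ * r) := by
          rw [MeasureTheory.integral_const_mul, exp_integral_Ioi hε r, hKdef]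
          field_simp
  -- bound for g'
  obtain ⟨Kg, hKg0, hKg⟩ : ∃ Kg : ℝ, 0 ≤ Kg ∧ ∀ r ≥ (0:ℝ), |deriv g r| ≤ Kg := by
    obtain ⟨R, hR⟩ := (Metric.tendsto_atTop.mp hg' 1 one_pos)
    obtain ⟨M, hM⟩ := (isCompact_Icc (a := (0:ℝ)) (b := R)).exists_bound_of_continuousOn
      hg'cont.continuousOn
    refine ⟨max M 1, le_trans zero_le_one (le_max_right _ _), fun r hr => ?_⟩
    rcases le_or_gt r R with h | h
    · exact le_trans (hM r ⟨hr, h⟩) (le_max_left _ _)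
    · have := hR r h.le
      rw [Real.dist_eq, sub_zero] at this
      exact le_trans this.le (le_max_right _ _)
  have hgbd : ∀ r ≥ (0:ℝ), |g r| ≤ Kg * r := by
    intro r hr
    have h := intervalIntegral.norm_integral_le_of_norm_le_const
      (f := deriv g) (a := 0) (b := r) (C := Kg) ?_
    · have heq : ∫ x in (0:ℝ)..r, deriv g x = g r - g 0 := by
        apply intervalIntegral.integral_deriv_eq_sub
        · exact fun x _ => (hg.differentiable (by norm_num)) x
        · exact hg'cont.intervalIntegrable 0 r
      rw [heq, hg0, sub_zero] at h
      simpa [abs_of_nonneg hr] using h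
    · intro x hx
      rw [uIoc_of_le hr] at hx
      exact hKg x hx.1.le
  set G : ℝ → ℝ := fun r => ∫ τ in (0:ℝ)..r, g τ with hGdef
  have hGd : ∀ r : ℝ, HasDerivAt G (g r) r := fun r =>
    (hg.continuous.integral_hasStrictDerivAt 0 r).hasDerivAt
  have hGcont : Continuous G := by
    rw [continuous_iff_continuousAt]; exact fun r => (hGd r).continuousAt
  have hGbd : ∀ r ≥ (0:ℝ), |G r| ≤ Kg * r ^ 2 := by
    intro r hr
    have h := intervalIntegral.norm_integral_le_of_norm_le_const
      (f := g) (a := 0) (b := r) (C := Kg * r) ?_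
    · calc |G r| ≤ Kg * r * |r - 0| := h
        _ = Kg * r ^ 2 := by rw [sub_zero, abs_of_nonneg hr]; ring
    · intro x hx
      rw [uIoc_of_le hr] at hx
      calc ‖g x‖ ≤ Kg * x := hgbd x hx.1.le
        _ ≤ Kg * r := by nlinarith [hx.1, hx.2]
  -- the potential function
  set F : ℝ → ℝ := fun r => G r * (deriv u r)^2 + G r * W r * (u r)^2
      - g r * u r * deriv u r + deriv g r * (u r)^2 / 2 with hFdef
  set T : ℝ → ℝ := fun r => (2 * g r * W r + G r * deriv W r
      + deriv (deriv g) r / 2) * (u r)^2 with hTdef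
  have hF0 : F 0 = 0 := by
    simp [hFdef, hGdef, hg0, hg'0, hu0, intervalIntegral.integral_same]
  have hFderiv : ∀ r ∈ Ioi (0:ℝ), HasDerivAt F (T r) r := by
    intro r hr
    rw [mem_Ioi] at hr
    have h := ((((hGd r).mul ((hu'd r hr).pow 2)).add
        (((hGd r).mul (hWd r hr)).mul ((hud r hr).pow 2))).sub
        (((hgd r).mul (hud r hr)).mul (hu'd r hr))).add
        (((hg'd r).mul ((hud r hr).pow 2)).div_const 2)
    refine h.congr_deriv ?_
    rw [hu''eq r hr]
    push_cast
    simp only [hTdef, Pi.pow_apply, Pi.mul_apply]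
    ring
  -- elementary exponential estimates
  have hexpfac : ∀ r ≥ (0:ℝ), Real.exp (-ε₀ * r) * Real.exp (ε₀/2 * r)
      = Real.exp (-(ε₀/2) * r) := by
    intro r _
    rw [← Real.exp_add]; ring_nf
  have hr_exp : ∀ r ≥ (0:ℝ), ε₀ * r ≤ 4 * Real.exp (ε₀/2 * r) := by
    intro r hr
    have hx : ε₀/4 * r + 1 ≤ Real.exp (ε₀/4 * r) := Real.add_one_le_exp _
    have hmono : Real.exp (ε₀/4 * r) ≤ Real.exp (ε₀/2 * r) := by
      apply Real.exp_le_exp.mpr; nlinarith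
    nlinarith
  have hr2_exp : ∀ r ≥ (0:ℝ), ε₀^2 * r^2 ≤ 16 * Real.exp (ε₀/2 * r) := by
    intro r hr
    have hx : ε₀/4 * r + 1 ≤ Real.exp (ε₀/4 * r) := Real.add_one_le_exp _
    have hsq : Real.exp (ε₀/4 * r) ^ 2 = Real.exp (ε₀/2 * r) := by
      rw [sq, ← Real.exp_add]; ring_nf
    have h1 : ε₀ * r ≤ 4 * Real.exp (ε₀/4 * r) := by nlinarith
    have h2 := mul_self_le_mul_self (mul_nonneg hε.le hr) h1
    have he : (0:ℝ) < Real.exp (ε₀/4 * r) := Real.exp_pos _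
    nlinarith
  set Cb : ℝ := (8*Kg/ε₀ + 16*Kg/ε₀^2) * Cs * Cu^2 with hCbdef
  have hTbd : ∀ r > (0:ℝ), |T r| ≤ Cb * Real.exp (-(ε₀/2) * r)
      + |deriv (deriv g) r| * (Cu^2/2) := by
    intro r hr
    have hr0 : (0:ℝ) ≤ r := hr.le
    have hu2b : (u r)^2 ≤ Cu^2 := by
      have h := hCu r hr0; nlinarith [abs_nonneg (u r), sq_abs (u r)]
    have hwb := hWbd r hr
    have hw'b := hW'bd r hr
    have hgb := hgbd r hr0
    have hGb := hGbd r hr0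
    have hep : (0:ℝ) < Real.exp (-ε₀ * r) := Real.exp_pos _
    have habs1 : |T r| ≤ (2 * |g r| * |W r| + |G r| * |deriv W r| + |deriv (deriv g) r|/2)
        * (u r)^2 := by
      rw [hTdef]
      simp only
      rw [abs_mul, abs_pow, sq_abs]
      apply mul_le_mul_of_nonneg_right _ (sq_nonneg _)
      calc |2 * g r * W r + G r * deriv W r + deriv (deriv g) r / 2|
          ≤ |2 * g r * W r + G r * deriv W r| + |deriv (deriv g) r / 2| := abs_add_le _ _
        _ ≤ |2 * g r * W r| + |G r * deriv W r| + |deriv (deriv g) r / 2| := by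
            have := abs_add_le (2 * g r * W r) (G r * deriv W r); linarith
        _ = 2 * |g r| * |W r| + |G r| * |deriv W r| + |deriv (deriv g) r|/2 := by
            rw [abs_mul, abs_mul, abs_mul, abs_div]
            simp [abs_of_nonneg, mul_assoc]
    have habs2 : (2 * |g r| * |W r| + |G r| * |deriv W r| + |deriv (deriv g) r|/2) * (u r)^2
        ≤ (2*(Kg*r) + Kg*r^2) * (Cs * Real.exp (-ε₀*r)) * Cu^2
          + |deriv (deriv g) r| * (Cu^2/2) := by
      have h1 : |g r| * |W r| ≤ (Kg*r)*(Cs*Real.exp (-ε₀*r)) :=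
        mul_le_mul hgb hwb (abs_nonneg _) (mul_nonneg hKg0 hr0)
      have h2 : |G r| * |deriv W r| ≤ (Kg*r^2)*(Cs*Real.exp (-ε₀*r)) :=
        mul_le_mul hGb hw'b (abs_nonneg _) (mul_nonneg hKg0 (sq_nonneg r))
      have hgg := abs_nonneg (deriv (deriv g) r)
      have hA : 2 * |g r| * |W r| + |G r| * |deriv W r|
          ≤ (2*(Kg*r) + Kg*r^2) * (Cs * Real.exp (-ε₀*r)) := by nlinarith [h1, h2]
      have hApos : (0:ℝ) ≤ 2 * |g r| * |W r| + |G r| * |deriv W r| := by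
        have := abs_nonneg (g r); have := abs_nonneg (W r)
        have := abs_nonneg (G r); have := abs_nonneg (deriv W r)
        positivity
      have t1 : (2 * |g r| * |W r| + |G r| * |deriv W r|) * (u r)^2
          ≤ (2*(Kg*r) + Kg*r^2) * (Cs * Real.exp (-ε₀*r)) * Cu^2 :=
        mul_le_mul hA hu2b (sq_nonneg _) (le_trans hApos hA)
      have t2 : |deriv (deriv g) r|/2 * (u r)^2 ≤ |deriv (deriv g) r| * (Cu^2/2) := by
        have h := mul_le_mul_of_nonneg_left hu2b hgg
        linarith
      have expand : (2 * |g r| * |W r| + |G r| * |deriv W r| + |deriv (deriv g) r|/2)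
          * (u r)^2 = (2 * |g r| * |W r| + |G r| * |deriv W r|) * (u r)^2
            + |deriv (deriv g) r|/2 * (u r)^2 := by ring
      rw [expand]
      linarith
    have habs3 : (2*(Kg*r) + Kg*r^2) * (Cs * Real.exp (-ε₀*r)) * Cu^2
        ≤ Cb * Real.exp (-(ε₀/2) * r) := by
      have h4 := hr_exp r hr0
      have h5 := hr2_exp r hr0
      have h6 := hexpfac r hr0
      rw [← mul_le_mul_iff_of_pos_right (show (0:ℝ) < ε₀^2 by positivity)]
      have hCb' : Cb * Real.exp (-(ε₀/2) * r) * ε₀^2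
          = (8*Kg*ε₀ + 16*Kg) * Cs * Cu^2
            * (Real.exp (-ε₀ * r) * Real.exp (ε₀/2 * r)) := by
        rw [← h6, hCbdef]; field_simp
      rw [hCb']
      have m1 := mul_le_mul_of_nonneg_left (mul_le_mul_of_nonneg_right h4 hep.le)
        (by positivity : (0:ℝ) ≤ Kg*Cs*Cu^2*ε₀)
      have m2 := mul_le_mul_of_nonneg_left (mul_le_mul_of_nonneg_right h5 hep.le)
        (by positivity : (0:ℝ) ≤ Kg*Cs*Cu^2)
      nlinarith [m1, m2]
    linarith
  have hTcont : ContinuousOn T (Ioi 0) := by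
    rw [hTdef]
    apply ContinuousOn.mul
    · apply ContinuousOn.add
      · apply ContinuousOn.add
        · exact ((continuous_const.mul hg.continuous).continuousOn).mul hW.continuousOn
        · exact (hGcont.continuousOn).mul hW'cont
      · exact (hg''cont.continuousOn).div_const 2
    · exact (huc.mono Ioi_subset_Ici_self).pow 2
  have hTint : IntegrableOn T (Ioi 0) := by
    apply Integrable.mono' (g := fun r => Cb * Real.exp (-(ε₀/2) * r)
      + |deriv (deriv g) r| * (Cu^2/2))
    · exact ((exp_neg_integrableOn_Ioi 0 (by positivity)).const_mul Cb).add
        ((hg''.abs).mul_const (Cu^2/2))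
    · exact hTcont.aestronglyMeasurable measurableSet_Ioi
    · refine (ae_restrict_iff' measurableSet_Ioi).mpr (ae_of_all _ fun r hr => ?_)
      exact hTbd r hr
  -- bounds on F
  have hu'sq : ∀ r > (0:ℝ), (deriv u r)^2 ≤ K^2 * Real.exp (-(2*ε₀)*r) := by
    intro r hr
    have h := sq_le_of_abs_le' (hu'bd r hr)
    have he : (K * Real.exp (-ε₀*r))^2 = K^2 * Real.exp (-(2*ε₀)*r) := by
      rw [mul_pow, sq (Real.exp _), ← Real.exp_add]; ring_nf
    linarith [he ▸ h]
  have hFbd4 : ∀ r > (0:ℝ),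
      |F r| ≤ |G r * (deriv u r)^2| + |G r * W r * (u r)^2|
        + |g r * u r * deriv u r| + |deriv g r * (u r)^2/2| := by
    intro r hr
    rw [hFdef]
    simp only
    set A := G r * (deriv u r)^2
    set B := G r * W r * (u r)^2
    set C := g r * u r * deriv u r
    set D := deriv g r * (u r)^2/2
    calc |A + B - C + D| ≤ |A + B - C| + |D| := abs_add_le _ _
      _ ≤ |A + B| + |C| + |D| := by
          have h := abs_add_le (A + B) (-C)
          rw [abs_neg] at h
          have : A + B - C = A + B + -C := by ring
          rw [this]; linarith
      _ ≤ |A| + |B| + |C| + |D| := by linarith [abs_add_le A B]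
  set Bf : ℝ → ℝ := fun r => Kg*K^2 * (r^2 * Real.exp (-(2*ε₀) * r))
      + Kg*Cs*Cu^2 * (r^2 * Real.exp (-ε₀ * r))
      + Kg*Cu*K * (r * Real.exp (-ε₀ * r)) + |deriv g r| * (Cu^2/2) with hBfdef
  have hFbd : ∀ r > (0:ℝ), |F r| ≤ Bf r := by
    intro r hr
    have hr0 := hr.le
    have hu'b := hu'bd r hr
    have hwb := hWbd r hr
    have hgb := hgbd r hr0
    have hGb := hGbd r hr0
    have hcub := hCu r hr0
    have hub2 : (u r)^2 ≤ Cu^2 := by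
      have := sq_le_of_abs_le' hcub; linarith [sq_abs (u r)]
    have hep : (0:ℝ) ≤ Real.exp (-ε₀ * r) := (Real.exp_pos _).le
    have b1 : |G r * (deriv u r)^2| ≤ Kg*K^2 * (r^2 * Real.exp (-(2*ε₀) * r)) := by
      rw [abs_mul, abs_pow, sq_abs]
      calc |G r| * (deriv u r)^2
          ≤ (Kg*r^2) * (K^2 * Real.exp (-(2*ε₀)*r)) :=
            mul_le_mul hGb (hu'sq r hr) (sq_nonneg _) (mul_nonneg hKg0 (sq_nonneg _))
        _ = Kg*K^2 * (r^2 * Real.exp (-(2*ε₀) * r)) := by ring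
    have b2 : |G r * W r * (u r)^2| ≤ Kg*Cs*Cu^2 * (r^2 * Real.exp (-ε₀ * r)) := by
      rw [abs_mul, abs_mul, abs_pow, sq_abs]
      have m : |G r| * |W r| ≤ (Kg*r^2) * (Cs*Real.exp (-ε₀*r)) :=
        mul_le_mul hGb hwb (abs_nonneg _) (mul_nonneg hKg0 (sq_nonneg r))
      calc |G r| * |W r| * (u r)^2
          ≤ (Kg*r^2) * (Cs*Real.exp (-ε₀*r)) * Cu^2 :=
            mul_le_mul m hub2 (sq_nonneg _)
              (le_trans (mul_nonneg (abs_nonneg _) (abs_nonneg _)) m)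
        _ = Kg*Cs*Cu^2 * (r^2 * Real.exp (-ε₀ * r)) := by ring
    have b3 : |g r * u r * deriv u r| ≤ Kg*Cu*K * (r * Real.exp (-ε₀ * r)) := by
      rw [abs_mul, abs_mul]
      have m1 : |g r| * |u r| ≤ (Kg*r) * Cu :=
        mul_le_mul hgb hcub (abs_nonneg _) (mul_nonneg hKg0 hr0)
      calc |g r| * |u r| * |deriv u r|
          ≤ (Kg*r) * Cu * (K * Real.exp (-ε₀*r)) :=
            mul_le_mul m1 hu'b (abs_nonneg _)
              (le_trans (mul_nonneg (abs_nonneg _) (abs_nonneg _)) m1)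
        _ = Kg*Cu*K * (r * Real.exp (-ε₀ * r)) := by ring
    have b4 : |deriv g r * (u r)^2/2| ≤ |deriv g r| * (Cu^2/2) := by
      rw [abs_div, abs_mul, abs_pow, sq_abs, abs_two]
      have := mul_le_mul_of_nonneg_left hub2 (abs_nonneg (deriv g r))
      linarith
    rw [hBfdef]
    simp only
    linarith [hFbd4 r hr, b1, b2, b3, b4]
  have hBf0 : Tendsto Bf atTop (𝓝 0) := by
    have t1 := (poly_exp_tendsto 2 (by linarith : (0:ℝ) < 2*ε₀)).const_mul (Kg*K^2)
    have t2 := (poly_exp_tendsto 2 hε).const_mul (Kg*Cs*Cu^2)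
    have t3 : Tendsto (fun r : ℝ => Kg*Cu*K * (r * Real.exp (-ε₀ * r))) atTop (𝓝 0) := by
      have := (poly_exp_tendsto 1 hε).const_mul (Kg*Cu*K)
      simpa [pow_one] using this
    have t4 : Tendsto (fun r => |deriv g r| * (Cu^2/2)) atTop (𝓝 0) := by
      have h := (hg'.abs).mul_const (Cu^2/2)
      simpa using h
    have final := ((t1.add t2).add t3).add t4
    have hz : Kg*K^2*0 + Kg*Cs*Cu^2*0 + 0 + 0 = (0:ℝ) := by ring
    rw [hz] at final
    exact final
  have hFtop : Tendsto F atTop (𝓝 0) := by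
    apply squeeze_zero_norm' _ hBf0
    filter_upwards [Ioi_mem_atTop (0:ℝ)] with r hr
    simpa [Real.norm_eq_abs] using hFbd r hr
  -- continuity at 0 from the right
  set B0 : ℝ → ℝ := fun r => |G r| * (K^2 + Cs*Cu^2) + |g r| * (Cu*K)
      + |deriv g r| * (Cu^2/2) with hB0def
  have hB0bd : ∀ r ∈ Ici (0:ℝ), |F r| ≤ B0 r := by
    intro r hr
    rw [mem_Ici] at hr
    rcases hr.eq_or_lt with h | h
    · subst h
      rw [hF0, abs_zero, hB0def]
      simp only
      rw [hg0, hg'0]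
      have : G 0 = 0 := intervalIntegral.integral_same
      rw [this]
      simp
    · have hr0 := h.le
      have hu'b := hu'bd r h
      have hwb := hWbd r h
      have hcub := hCu r hr0
      have hub2 : (u r)^2 ≤ Cu^2 := by
        have := sq_le_of_abs_le' hcub; linarith [sq_abs (u r)]
      have hexp1 : Real.exp (-ε₀ * r) ≤ 1 := hexple r hr0
      have hep : (0:ℝ) ≤ Real.exp (-ε₀ * r) := (Real.exp_pos _).le
      have hu'K : |deriv u r| ≤ K := by nlinarith
      have hwC : |W r| ≤ Cs := by nlinarith
      have b1 : |G r * (deriv u r)^2| ≤ |G r| * K^2 := by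
        rw [abs_mul, abs_pow, sq_abs]
        have h2 := sq_le_of_abs_le' hu'K
        exact mul_le_mul_of_nonneg_left h2 (abs_nonneg _)
      have b2 : |G r * W r * (u r)^2| ≤ |G r| * (Cs*Cu^2) := by
        rw [abs_mul, abs_mul, abs_pow, sq_abs]
        have m : |W r| * (u r)^2 ≤ Cs * Cu^2 :=
          mul_le_mul hwC hub2 (sq_nonneg _) hCs.le
        calc |G r| * |W r| * (u r)^2 = |G r| * (|W r| * (u r)^2) := by ring
          _ ≤ |G r| * (Cs*Cu^2) := mul_le_mul_of_nonneg_left m (abs_nonneg _)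
      have b3 : |g r * u r * deriv u r| ≤ |g r| * (Cu*K) := by
        rw [abs_mul, abs_mul]
        have m : |u r| * |deriv u r| ≤ Cu * K :=
          mul_le_mul hcub hu'K (abs_nonneg _) hCu0
        calc |g r| * |u r| * |deriv u r| = |g r| * (|u r| * |deriv u r|) := by ring
          _ ≤ |g r| * (Cu*K) := mul_le_mul_of_nonneg_left m (abs_nonneg _)
      have b4 : |deriv g r * (u r)^2/2| ≤ |deriv g r| * (Cu^2/2) := by
        rw [abs_div, abs_mul, abs_pow, sq_abs, abs_two]
        have := mul_le_mul_of_nonneg_left hub2 (abs_nonneg (deriv g r))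
        linarith
      have hfb := hFbd4 r h
      rw [hB0def]
      simp only
      nlinarith [b1, b2, b3, b4]
  have hB0cont : Continuous B0 := by
    rw [hB0def]
    exact (((hGcont.abs).mul continuous_const).add
      ((hg.continuous.abs).mul continuous_const)).add
      ((hg'cont.abs).mul continuous_const)
  have hB0zero : B0 0 = 0 := by
    rw [hB0def]
    simp only
    rw [hg0, hg'0]
    have : G 0 = 0 := intervalIntegral.integral_same
    rw [this]
    simp
  have hFcwa : ContinuousWithinAt F (Ici 0) 0 := by
    have hB0t : Tendsto B0 (𝓝[Ici 0] (0:ℝ)) (𝓝 0) := by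
      have := (hB0cont.tendsto 0).mono_left (nhdsWithin_le_nhds (s := Ici (0:ℝ)))
      rwa [hB0zero] at this
    have h0 : Tendsto F (𝓝[Ici 0] (0:ℝ)) (𝓝 0) := by
      apply squeeze_zero_norm' _ hB0t
      exact eventually_nhdsWithin_of_forall fun r hr => by
        simpa [Real.norm_eq_abs] using hB0bd r hr
    rw [ContinuousWithinAt, hF0]
    exact h0
  have := integral_Ioi_of_hasDerivAt_of_tendsto hFcwa hFderiv hTint hFtop
  rw [hF0, sub_zero] at this
  simpa [hTdef, hGdef] using this
end

section
/- Let W(r) = -α(α+1)/r² + W₂(r) with α ≥ 0 and W₂ ∈ C¹(0,∞) positive strictly decreasing with |W₂(r)| ≤ C e^{-ε₀ r}. If u ∈ H¹(0,∞) with u(0) = 0 satisfies -u'' - W u = 0 in the distributional sense on (0,∞) and u is bounded, then there exists C ∈ ℝ such that u(r) = C r^{-α} + O(e^{-ε₀ r/2}) and u'(r) = -C α r^{-α-1} + O(e^{-ε₀ r/2}) as r → ∞. -/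
open MeasureTheory Set Filter Topology Asymptotics

lemma expDeriv {ε : ℝ} (hε : 0 < ε) (x : ℝ) :
    HasDerivAt (fun s => -Real.exp (-ε * s) / ε) (Real.exp (-ε * x)) x := by
  have h : HasDerivAt (fun s : ℝ => -ε * s) (-ε) x := by
    simpa using (hasDerivAt_id x).const_mul (-ε)
  have := (h.exp.neg.div_const ε)
  refine this.congr_deriv ?_
  field_simp

lemma expTendsto {ε : ℝ} (hε : 0 < ε) :
    Tendsto (fun s => -Real.exp (-ε * s) / ε) atTop (nhds 0) := by
  have : Tendsto (fun s : ℝ => -ε * s) atTop atBot := by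
    apply Tendsto.const_mul_atTop_of_neg (neg_neg_iff_pos.mpr hε) tendsto_id
  have h2 := (Real.tendsto_exp_atBot.comp this).neg.div_const ε
  simpa using h2

lemma expIntOn {ε : ℝ} (hε : 0 < ε) (a : ℝ) :
    IntegrableOn (fun s => Real.exp (-ε * s)) (Ioi a) := by
  apply integrableOn_Ioi_deriv_of_nonneg' (g := fun s => -Real.exp (-ε * s) / ε)
    (fun x _ => expDeriv hε x) (fun x _ => (Real.exp_pos _).le) (expTendsto hε)

lemma expIntVal {ε : ℝ} (hε : 0 < ε) (a : ℝ) :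
    ∫ s in Ioi a, Real.exp (-ε * s) = Real.exp (-ε * a) / ε := by
  have := integral_Ioi_of_hasDerivAt_of_tendsto' (fun x _ => expDeriv hε x)
    (expIntOn hε a) (expTendsto hε)
  rw [this]; ring

lemma rpowBound {p ε : ℝ} (hp : 0 ≤ p) (hε : 0 < ε) :
    ∃ M : ℝ, 1 ≤ M ∧ ∀ s : ℝ, 1 ≤ s → s ^ p ≤ M * Real.exp (ε * s) := by
  have h := isLittleO_rpow_exp_pos_mul_atTop p hε
  rw [Asymptotics.isLittleO_iff] at h
  obtain ⟨R, hR⟩ := (h (c := 1) one_pos).exists_forall_of_atTop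
  refine ⟨max 1 ((max R 1) ^ p), le_max_left _ _, fun s hs => ?_⟩
  rcases le_or_gt (max R 1) s with h1 | h1
  · have := hR s (le_trans (le_max_left R 1) h1)
    rw [Real.norm_eq_abs, Real.norm_eq_abs, abs_of_nonneg (Real.rpow_nonneg (by linarith) p),
      abs_of_nonneg (Real.exp_pos _).le, one_mul] at this
    calc s ^ p ≤ Real.exp (ε * s) := this
    _ ≤ max 1 ((max R 1) ^ p) * Real.exp (ε * s) := by
        nlinarith [Real.exp_pos (ε * s), le_max_left (1:ℝ) ((max R 1) ^ p)]
  · have h2 : s ^ p ≤ (max R 1) ^ p :=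
      Real.rpow_le_rpow (by linarith) h1.le hp
    have h3 : (1:ℝ) ≤ Real.exp (ε * s) := by
      rw [Real.one_le_exp_iff]; positivity
    calc s ^ p ≤ (max R 1) ^ p := h2
    _ ≤ max 1 ((max R 1) ^ p) * Real.exp (ε * s) := by
        nlinarith [le_max_right (1:ℝ) ((max R 1) ^ p), Real.rpow_nonneg (le_trans zero_le_one (le_max_right R 1)) p]

lemma contraAux (wf : ℝ → ℝ) (α B L r₁ : ℝ) (hα : 0 ≤ α) (hB : 0 ≤ B) (hL : 0 < L)
    (hr₁ : 1 ≤ r₁)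
    (hkey : ∀ r, r₁ ≤ r → L / 2 * r ^ (2*α) * r ≤ wf (2*r) - wf r)
    (hwb : ∀ r, 1 ≤ r → |wf r| ≤ B * r ^ α) : False := by
  set D := B * (2 ^ (α:ℝ) + 1) with hD
  have h2a : (0:ℝ) < 2 ^ (α:ℝ) := Real.rpow_pos_of_pos two_pos α
  have hD0 : 0 ≤ D := by positivity
  set r := max r₁ (2*D/L + 1) with hrdef
  have hrr₁ : r₁ ≤ r := le_max_left _ _
  have hr1 : 1 ≤ r := le_trans hr₁ hrr₁
  have hr0 : 0 < r := lt_of_lt_of_le one_pos hr1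
  have h2r1 : 1 ≤ 2*r := by linarith
  have key := hkey r hrr₁
  have hw2 := hwb (2*r) h2r1
  have hw1 := hwb r hr1
  have h2r : (2*r) ^ (α:ℝ) = 2 ^ (α:ℝ) * r ^ α := Real.mul_rpow (by norm_num) (by linarith)
  have hpa : 1 ≤ r ^ α := by
    calc (1:ℝ) = r ^ (0:ℝ) := (Real.rpow_zero r).symm
    _ ≤ r ^ α := Real.rpow_le_rpow_of_exponent_le hr1 hα
  have hup : wf (2*r) - wf r ≤ D * r ^ α := by
    have a1 := (abs_le.mp hw2).2
    have a2 := (abs_le.mp hw1).2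
    have a3 := (abs_le.mp hw1).1
    rw [h2r] at a1
    nlinarith
  have hp2a : r ^ α ≤ r ^ (2*α) := Real.rpow_le_rpow_of_exponent_le hr1 (by linarith)
  have hLr : 2*D + L ≤ L * r := by
    have h : L * (2*D/L + 1) = 2*D + L := by field_simp
    nlinarith [le_max_right r₁ (2*D/L + 1)]
  have s1 : L/2 * (r ^ α) * r ≤ L/2 * (r ^ (2*α)) * r := by nlinarith
  have s2 : (D + L/2) * r ^ α ≤ L/2 * r * r ^ α := by
    nlinarith [mul_nonneg (sub_nonneg.mpr hLr) (le_trans zero_le_one hpa)]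
  nlinarith

set_option maxHeartbeats 1600000 in
theorem stmt12 (W₂ u : ℝ → ℝ) (α C ε₀ : ℝ) (hα : 0 ≤ α) (hC : 0 < C) (hε : 0 < ε₀)
    (hW₂1 : ContDiffOn ℝ 1 W₂ (Ioi 0)) (hW₂pos : ∀ r > (0:ℝ), 0 < W₂ r)
    (hW₂dec : StrictAntiOn W₂ (Ioi 0))
    (hW₂b : ∀ r > (0:ℝ), |W₂ r| ≤ C * Real.exp (-ε₀ * r))
    (huc : ContinuousOn u (Ici 0)) (hu0 : u 0 = 0)
    (huL2 : MemLp u 2 (volume.restrict (Ioi 0)))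
    (hu'L2 : MemLp (deriv u) 2 (volume.restrict (Ioi 0)))
    (hu2 : ContDiffOn ℝ 2 u (Ioi 0))
    (hode : ∀ r > (0:ℝ),
      deriv (deriv u) r + (-(α * (α + 1)) / r^2 + W₂ r) * u r = 0)
    (hub : ∃ B : ℝ, ∀ r ≥ (0:ℝ), |u r| ≤ B) :
    ∃ c : ℝ,
      (fun r => u r - c * r ^ (-α)) =O[atTop] (fun r => Real.exp (-ε₀ * r / 2)) ∧
      (fun r => deriv u r + c * α * r ^ (-α - 1)) =O[atTop]
        (fun r => Real.exp (-ε₀ * r / 2)) := by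
  obtain ⟨B, hB⟩ := hub
  have hB0 : 0 ≤ B := le_trans (abs_nonneg _) (hB 0 le_rfl)
  set u₁ := deriv u with hu₁def
  have hu2' : ContDiffOn ℝ 1 u₁ (Ioi 0) := hu2.deriv_of_isOpen isOpen_Ioi (by norm_num)
  have hud : ∀ r ∈ Ioi (0:ℝ), HasDerivAt u (u₁ r) r := fun r hr =>
    ((hu2.differentiableOn (by norm_num)).differentiableAt (isOpen_Ioi.mem_nhds hr)).hasDerivAt
  have hu1d : ∀ r ∈ Ioi (0:ℝ), HasDerivAt u₁ (deriv u₁ r) r := fun r hr =>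
    ((hu2'.differentiableOn (by norm_num)).differentiableAt (isOpen_Ioi.mem_nhds hr)).hasDerivAt
  have hW₂c : ContinuousOn W₂ (Ioi 0) := hW₂1.continuousOn
  have huc' : ContinuousOn u (Ioi 0) := huc.mono Ioi_subset_Ici_self
  have hu₁c : ContinuousOn u₁ (Ioi 0) := hu2'.continuousOn
  have hrpowc : ∀ q : ℝ, ContinuousOn (fun s : ℝ => s ^ q) (Ioi (0:ℝ)) := fun q x hx =>
    (Real.continuousAt_rpow_const x q (Or.inl (ne_of_gt hx))).continuousWithinAt
  set F : ℝ → ℝ := fun r => α * r ^ (-α-1) * u r + r ^ (-α) * u₁ r with hFdef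
  have hFc : ContinuousOn F (Ioi 0) :=
    ((continuousOn_const.mul (hrpowc _)).mul huc').add ((hrpowc _).mul hu₁c)
  have hF' : ∀ r ∈ Ioi (0:ℝ), HasDerivAt F (-(r ^ (-α) * (W₂ r * u r))) r := by
    intro r hr
    have hr0 : (0:ℝ) < r := hr
    have h1 : HasDerivAt (fun s : ℝ => s ^ (-α-1)) ((-α-1) * r ^ (-α-1-1)) r :=
      Real.hasDerivAt_rpow_const (Or.inl hr0.ne')
    have h2 : HasDerivAt (fun s : ℝ => s ^ (-α)) ((-α) * r ^ (-α-1)) r :=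
      Real.hasDerivAt_rpow_const (Or.inl hr0.ne')
    have hA : HasDerivAt (fun s => α * s ^ (-α-1) * u s)
        ((α * ((-α-1) * r ^ (-α-1-1))) * u r + (α * r ^ (-α-1)) * u₁ r) r :=
      (h1.const_mul α).mul (hud r hr)
    have hBB : HasDerivAt (fun s => s ^ (-α) * u₁ s)
        (((-α) * r ^ (-α-1)) * u₁ r + r ^ (-α) * deriv u₁ r) r := h2.mul (hu1d r hr)
    have hsum := hA.add hBB
    refine hsum.congr_deriv ?_
    have hd2 : deriv u₁ r = (α * (α+1) / r^2 - W₂ r) * u r := by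
      have := hode r hr0
      have hne : deriv (deriv u) r = deriv u₁ r := rfl
      rw [hne] at this
      field_simp at this ⊢
      nlinarith [this]
    rw [hd2]
    have e1 : r ^ (-α-1-1) = r ^ (-α) / r ^ 2 := by
      rw [show -α-1-1 = -α - (2:ℝ) by ring, Real.rpow_sub hr0]
      congr 1
      rw [show (2:ℝ) = ((2:ℕ):ℝ) by norm_num, Real.rpow_natCast]
    rw [e1]
    have hr2 : r^2 ≠ 0 := by positivity
    field_simp
    ring
  set h : ℝ → ℝ := fun s => s ^ (-α) * (W₂ s * u s) with hhdef
  have hhc : ContinuousOn h (Ioi 0) := (hrpowc _).mul (hW₂c.mul huc')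
  have hgb : ∀ s : ℝ, 1 ≤ s → |h s| ≤ B * C * Real.exp (-ε₀ * s) := by
    intro s hs
    have hs0 : (0:ℝ) < s := by linarith
    have h1 : |s ^ (-α)| ≤ 1 := by
      rw [abs_of_nonneg (Real.rpow_nonneg hs0.le _)]
      exact Real.rpow_le_one_of_one_le_of_nonpos hs (by linarith)
    have h2 : |W₂ s| ≤ C * Real.exp (-ε₀ * s) := hW₂b s hs0
    have h3 : |u s| ≤ B := hB s hs0.le
    calc |h s| = |s ^ (-α)| * (|W₂ s| * |u s|) := by rw [hhdef]; simp [abs_mul]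
    _ ≤ 1 * (C * Real.exp (-ε₀ * s) * B) := by
        apply mul_le_mul h1 _ (by positivity) zero_le_one
        exact mul_le_mul h2 h3 (abs_nonneg _) (by positivity)
    _ = B * C * Real.exp (-ε₀ * s) := by ring
  have hmeas : ∀ b : ℝ, 1 ≤ b → AEStronglyMeasurable h (volume.restrict (Ioi b)) := fun b hb =>
    (hhc.mono (Ioi_subset_Ioi (by linarith))).aestronglyMeasurable measurableSet_Ioi
  have hInt : ∀ b : ℝ, 1 ≤ b → IntegrableOn h (Ioi b) := by
    intro b hb
    apply Integrable.mono' ((expIntOn hε b).const_mul (B*C)) (hmeas b hb)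
    refine (ae_restrict_iff' measurableSet_Ioi).mpr (ae_of_all _ fun s hs => ?_)
    exact hgb s (le_trans hb (le_of_lt hs))
  have htail : ∀ b : ℝ, 1 ≤ b → |∫ s in Ioi b, h s| ≤ B * C / ε₀ * Real.exp (-ε₀ * b) := by
    intro b hb
    have h1 : ‖∫ s in Ioi b, h s‖ ≤ ∫ s in Ioi b, B * C * Real.exp (-ε₀ * s) := by
      apply norm_integral_le_of_norm_le ((expIntOn hε b).const_mul (B*C))
      refine (ae_restrict_iff' measurableSet_Ioi).mpr (ae_of_all _ fun s hs => ?_)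
      exact hgb s (le_trans hb (le_of_lt hs))
    rw [Real.norm_eq_abs] at h1
    calc |∫ s in Ioi b, h s| ≤ ∫ s in Ioi b, B * C * Real.exp (-ε₀ * s) := h1
    _ = B * C * (Real.exp (-ε₀ * b) / ε₀) := by
        rw [MeasureTheory.integral_const_mul, expIntVal hε]
    _ = B * C / ε₀ * Real.exp (-ε₀ * b) := by ring
  have hFTC : ∀ b : ℝ, 1 ≤ b → F b - F 1 = -∫ s in (1:ℝ)..b, h s := by
    intro b hb
    have h1 : ∫ s in (1:ℝ)..b, -h s = F b - F 1 := by
      apply intervalIntegral.integral_eq_sub_of_hasDerivAt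
      · intro x hx
        rw [uIcc_of_le hb] at hx
        exact hF' x (mem_Ioi.mpr (lt_of_lt_of_le one_pos hx.1))
      · apply ContinuousOn.intervalIntegrable
        rw [uIcc_of_le hb]
        exact (hhc.mono (fun x hx => mem_Ioi.mpr (lt_of_lt_of_le one_pos hx.1))).neg
    rw [intervalIntegral.integral_neg] at h1
    linarith
  set L : ℝ := F 1 - ∫ s in Ioi 1, h s with hLdef
  have hsplit : ∀ b : ℝ, 1 ≤ b →
      (∫ s in Ioi 1, h s) = (∫ s in (1:ℝ)..b, h s) + ∫ s in Ioi b, h s := by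
    intro b hb
    rw [intervalIntegral.integral_of_le hb,
      ← setIntegral_union (Ioc_disjoint_Ioi le_rfl) measurableSet_Ioi
        ((hInt 1 le_rfl).mono_set Ioc_subset_Ioi_self) (hInt b hb),
      Ioc_union_Ioi_eq_Ioi hb]
  have hFb : ∀ b : ℝ, 1 ≤ b → F b - L = ∫ s in Ioi b, h s := by
    intro b hb
    have e1 := hFTC b hb
    have e2 := hsplit b hb
    rw [hLdef]; linarith
  have hFtail : ∀ b : ℝ, 1 ≤ b → |F b - L| ≤ B * C / ε₀ * Real.exp (-ε₀ * b) := by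
    intro b hb; rw [hFb b hb]; exact htail b hb
  set w : ℝ → ℝ := fun r => r ^ α * u r with hwdef
  have hw' : ∀ s ∈ Ioi (0:ℝ), HasDerivAt w (s ^ (2*α) * F s) s := by
    intro s hs
    have hs0 : (0:ℝ) < s := hs
    have h1 : HasDerivAt (fun t : ℝ => t ^ α) (α * s ^ (α-1)) s :=
      Real.hasDerivAt_rpow_const (Or.inl hs0.ne')
    have h2 := h1.mul (hud s hs)
    refine h2.congr_deriv (Eq.symm ?_)
    have e3 : s ^ (2*α) * s ^ (-α-1) = s ^ (α-1) := by
      rw [← Real.rpow_add hs0]; congr 1; ring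
    have e4 : s ^ (2*α) * s ^ (-α) = s ^ α := by
      rw [← Real.rpow_add hs0]; congr 1; ring
    calc s ^ (2*α) * F s
        = (s^(2*α) * s^(-α-1)) * (α * u s) + (s^(2*α)*s^(-α)) * u₁ s := by
          rw [hFdef]; ring
    _ = α * s ^ (α-1) * u s + s ^ α * u₁ s := by rw [e3, e4]; ring
  have hwFTC : ∀ a b : ℝ, 1 ≤ a → a ≤ b → w b - w a = ∫ s in a..b, s ^ (2*α) * F s := by
    intro a b ha hab
    symm
    apply intervalIntegral.integral_eq_sub_of_hasDerivAt
    · intro x hx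
      rw [uIcc_of_le hab] at hx
      exact hw' x (mem_Ioi.mpr (lt_of_lt_of_le one_pos (le_trans ha hx.1)))
    · apply ContinuousOn.intervalIntegrable
      rw [uIcc_of_le hab]
      exact ((hrpowc _).mul hFc).mono
        (fun x hx => mem_Ioi.mpr (lt_of_lt_of_le one_pos (le_trans ha hx.1)))
  have hwbnd : ∀ r : ℝ, 1 ≤ r → |w r| ≤ B * r ^ α := by
    intro r hr
    have hr0 : (0:ℝ) < r := by linarith
    have e : w r = r ^ α * u r := rfl
    rw [e, abs_mul, abs_of_nonneg (Real.rpow_nonneg hr0.le _)]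
    calc r ^ α * |u r| ≤ r ^ α * B :=
          mul_le_mul_of_nonneg_left (hB r hr0.le) (Real.rpow_nonneg hr0.le _)
    _ = B * r ^ α := by ring
  have hwcont : ContinuousOn (fun s : ℝ => s ^ (2*α) * F s) (Ioi 0) := (hrpowc _).mul hFc
  have hL0 : L = 0 := by
    by_contra hL
    have habs : 0 < |L| := abs_pos.mpr hL
    have htend : Tendsto (fun b : ℝ => B * C / ε₀ * Real.exp (-ε₀ * b)) atTop (nhds 0) := by
      have h1 : Tendsto (fun b : ℝ => -ε₀ * b) atTop atBot :=
        Tendsto.const_mul_atTop_of_neg (neg_neg_iff_pos.mpr hε) tendsto_id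
      have h2 := (Real.tendsto_exp_atBot.comp h1).const_mul (B*C/ε₀)
      simpa using h2
    obtain ⟨r₀, hr₀⟩ := eventually_atTop.mp
      (htend.eventually_lt_const (by positivity : (0:ℝ) < |L|/2))
    set r₁ := max r₀ 1 with hr₁def
    have hr₁1 : (1:ℝ) ≤ r₁ := le_max_right _ _
    have hFnear : ∀ b : ℝ, r₁ ≤ b → |F b - L| ≤ |L|/2 := by
      intro b hb
      have hb1 : 1 ≤ b := le_trans hr₁1 hb
      exact le_trans (hFtail b hb1) (le_of_lt (hr₀ b (le_trans (le_max_left _ _) hb)))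
    have hIcc : ∀ r : ℝ, 1 ≤ r → Icc r (2*r) ⊆ Ioi (0:ℝ) := fun r hr x hx =>
      mem_Ioi.mpr (lt_of_lt_of_le one_pos (le_trans hr hx.1))
    rcases lt_or_gt_of_ne hL with hLneg | hLpos
    · -- L < 0
      apply contraAux (fun r => -w r) α B (-L) r₁ hα hB0 (by linarith) hr₁1 _
        (fun r hr => by simpa using hwbnd r hr)
      intro r hr
      have hr1 : 1 ≤ r := le_trans hr₁1 hr
      have hr0 : (0:ℝ) < r := by linarith
      have h2r : r ≤ 2*r := by linarith
      have key := hwFTC r (2*r) hr1 h2r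
      have hmono := intervalIntegral.integral_mono_on h2r
        (ContinuousOn.intervalIntegrable (by rw [uIcc_of_le h2r]; exact hwcont.mono (hIcc r hr1)))
        (intervalIntegrable_const (μ := volume) (c := (L/2) * r ^ (2*α)))
        (fun x hx => ?_)
      · have hconst : (∫ _ in r..(2*r), (L/2) * r ^ (2*α)) = r * ((L/2) * r ^ (2*α)) := by
          rw [intervalIntegral.integral_const, smul_eq_mul]; ring
        have : -w (2*r) - -w r = -(w (2*r) - w r) := by ring
        rw [this, key]
        rw [hconst] at hmono
        nlinarith [hmono]
      · -- x ∈ Icc r (2r) : x^{2α} F x ≤ L/2 * r^{2α}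
        have hxr : r ≤ x := hx.1
        have hx0 : (0:ℝ) < x := lt_of_lt_of_le hr0 hxr
        have hFx := hFnear x (le_trans hr hxr)
        have hFneg : F x ≤ L/2 := by
          have := abs_le.mp hFx
          have hLabs : |L| = -L := abs_of_neg hLneg
          rw [hLabs] at this
          linarith [this.2]
        have hx2a : r ^ (2*α) ≤ x ^ (2*α) :=
          Real.rpow_le_rpow hr0.le hxr (by linarith)
        have hxa0 : (0:ℝ) ≤ r ^ (2*α) := Real.rpow_nonneg hr0.le _
        nlinarith [hFneg, hx2a, hxa0]
    · -- L > 0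
      apply contraAux w α B L r₁ hα hB0 hLpos hr₁1 _ hwbnd
      intro r hr
      have hr1 : 1 ≤ r := le_trans hr₁1 hr
      have hr0 : (0:ℝ) < r := by linarith
      have h2r : r ≤ 2*r := by linarith
      have key := hwFTC r (2*r) hr1 h2r
      have hmono := intervalIntegral.integral_mono_on h2r
        (intervalIntegrable_const (μ := volume) (c := (L/2) * r ^ (2*α)))
        (ContinuousOn.intervalIntegrable (by rw [uIcc_of_le h2r]; exact hwcont.mono (hIcc r hr1)))
        (fun x hx => ?_)
      · have hconst : (∫ _ in r..(2*r), (L/2) * r ^ (2*α)) = r * ((L/2) * r ^ (2*α)) := by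
          rw [intervalIntegral.integral_const, smul_eq_mul]; ring
        rw [key]
        rw [hconst] at hmono
        nlinarith [hmono]
      · have hxr : r ≤ x := hx.1
        have hx0 : (0:ℝ) < x := lt_of_lt_of_le hr0 hxr
        have hFx := hFnear x (le_trans hr hxr)
        have hFpos : L/2 ≤ F x := by
          have := abs_le.mp hFx
          have hLabs : |L| = L := abs_of_pos hLpos
          rw [hLabs] at this
          linarith [this.1]
        have hx2a : r ^ (2*α) ≤ x ^ (2*α) :=
          Real.rpow_le_rpow hr0.le hxr (by linarith)
        have hxa0 : (0:ℝ) ≤ r ^ (2*α) := Real.rpow_nonneg hr0.le _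
        nlinarith [hFpos, hx2a, hxa0]
  have hFbound : ∀ b : ℝ, 1 ≤ b → |F b| ≤ B*C/ε₀ * Real.exp (-ε₀ * b) := by
    intro b hb
    have := hFtail b hb
    rwa [hL0, sub_zero] at this
  obtain ⟨M, hM1, hM⟩ := rpowBound (p := 2*α) (by linarith) (half_pos hε)
  set K₂ := M * (B*C/ε₀) with hK₂def
  have hK20 : 0 ≤ K₂ := by positivity
  have hK2 : ∀ s : ℝ, 1 ≤ s → |s ^ (2*α) * F s| ≤ K₂ * Real.exp (-(ε₀/2) * s) := by
    intro s hs
    have hs0 : (0:ℝ) < s := by linarith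
    rw [abs_mul, abs_of_nonneg (Real.rpow_nonneg hs0.le _)]
    have h1 := hM s hs
    have h2 := hFbound s hs
    have e : Real.exp (ε₀/2 * s) * Real.exp (-ε₀ * s) = Real.exp (-(ε₀/2) * s) := by
      rw [← Real.exp_add]; congr 1; ring
    calc s ^ (2*α) * |F s|
        ≤ (M * Real.exp (ε₀/2 * s)) * (B*C/ε₀ * Real.exp (-ε₀ * s)) :=
          mul_le_mul h1 h2 (abs_nonneg _) (by positivity)
    _ = K₂ * (Real.exp (ε₀/2*s) * Real.exp (-ε₀*s)) := by rw [hK₂def]; ring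
    _ = K₂ * Real.exp (-(ε₀/2) * s) := by rw [e]
  have hε2 : 0 < ε₀/2 := half_pos hε
  have hwInt : ∀ b : ℝ, 1 ≤ b → IntegrableOn (fun s => s ^ (2*α) * F s) (Ioi b) := by
    intro b hb
    apply Integrable.mono' ((expIntOn hε2 b).const_mul K₂)
      ((hwcont.mono (Ioi_subset_Ioi (by linarith))).aestronglyMeasurable measurableSet_Ioi)
    refine (ae_restrict_iff' measurableSet_Ioi).mpr (ae_of_all _ fun s hs => ?_)
    exact hK2 s (le_trans hb (le_of_lt hs))
  have hwtail : ∀ b : ℝ, 1 ≤ b →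
      |∫ s in Ioi b, s ^ (2*α) * F s| ≤ K₂ / (ε₀/2) * Real.exp (-(ε₀/2) * b) := by
    intro b hb
    have h1 : ‖∫ s in Ioi b, s ^ (2*α) * F s‖ ≤ ∫ s in Ioi b, K₂ * Real.exp (-(ε₀/2) * s) := by
      apply norm_integral_le_of_norm_le ((expIntOn hε2 b).const_mul K₂)
      refine (ae_restrict_iff' measurableSet_Ioi).mpr (ae_of_all _ fun s hs => ?_)
      exact hK2 s (le_trans hb (le_of_lt hs))
    rw [Real.norm_eq_abs] at h1
    calc |∫ s in Ioi b, s ^ (2*α) * F s| ≤ ∫ s in Ioi b, K₂ * Real.exp (-(ε₀/2) * s) := h1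
    _ = K₂ * (Real.exp (-(ε₀/2) * b) / (ε₀/2)) := by
        rw [MeasureTheory.integral_const_mul, expIntVal hε2]
    _ = K₂ / (ε₀/2) * Real.exp (-(ε₀/2) * b) := by ring
  set c : ℝ := w 1 + ∫ s in Ioi 1, s ^ (2*α) * F s with hcdef
  have hwsplit : ∀ b : ℝ, 1 ≤ b →
      (∫ s in Ioi 1, s ^ (2*α) * F s)
        = (∫ s in (1:ℝ)..b, s ^ (2*α) * F s) + ∫ s in Ioi b, s ^ (2*α) * F s := by
    intro b hb
    rw [intervalIntegral.integral_of_le hb,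
      ← setIntegral_union (Ioc_disjoint_Ioi le_rfl) measurableSet_Ioi
        ((hwInt 1 le_rfl).mono_set Ioc_subset_Ioi_self) (hwInt b hb),
      Ioc_union_Ioi_eq_Ioi hb]
  have hwc : ∀ b : ℝ, 1 ≤ b → |w b - c| ≤ K₂ / (ε₀/2) * Real.exp (-(ε₀/2) * b) := by
    intro b hb
    have e1 := hwFTC 1 b le_rfl hb
    have e2 := hwsplit b hb
    have e3 : w b - c = -∫ s in Ioi b, s ^ (2*α) * F s := by rw [hcdef]; linarith
    rw [e3, abs_neg]
    exact hwtail b hb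
  refine ⟨c, ?_, ?_⟩
  · rw [Asymptotics.isBigO_iff]
    refine ⟨K₂ / (ε₀/2), eventually_atTop.mpr ⟨1, fun r hr => ?_⟩⟩
    have hr0 : (0:ℝ) < r := by linarith
    have e6 : r ^ (-α) * r ^ α = 1 := by
      rw [← Real.rpow_add hr0]; simp
    have e7 : u r - c * r ^ (-α) = r ^ (-α) * (w r - c) := by
      have hwr : w r = r ^ α * u r := rfl
      have expand : r ^ (-α) * (r ^ α * u r - c)
          = (r ^ (-α) * r ^ α) * u r - c * r ^ (-α) := by ring
      rw [hwr, expand, e6, one_mul]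
    rw [Real.norm_eq_abs, Real.norm_eq_abs, e7, abs_mul,
      abs_of_nonneg (Real.rpow_nonneg hr0.le _),
      abs_of_nonneg (Real.exp_pos _).le]
    have h8 : r ^ (-α) ≤ 1 := Real.rpow_le_one_of_one_le_of_nonpos hr (by linarith)
    have h9 := hwc r hr
    have e10 : Real.exp (-ε₀ * r / 2) = Real.exp (-(ε₀/2) * r) := by congr 1; ring
    rw [e10]
    calc r ^ (-α) * |w r - c| ≤ |w r - c| := mul_le_of_le_one_left (abs_nonneg _) h8
    _ ≤ K₂ / (ε₀/2) * Real.exp (-(ε₀/2) * r) := h9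
  · rw [Asymptotics.isBigO_iff]
    refine ⟨K₂ + α * (K₂ / (ε₀/2)), eventually_atTop.mpr ⟨1, fun r hr => ?_⟩⟩
    have hr0 : (0:ℝ) < r := by linarith
    have e6 : r ^ α * r ^ (-α) = 1 := by rw [← Real.rpow_add hr0]; simp
    have e7 : u₁ r + c*α*r^(-α-1) = r ^ α * F r - α * r^(-α-1) * (w r - c) := by
      have hwr : w r = r ^ α * u r := rfl
      have hFr : F r = α * r ^ (-α-1) * u r + r ^ (-α) * u₁ r := rfl
      have expand : r ^ α * (α * r ^ (-α-1) * u r + r ^ (-α) * u₁ r)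
            - α * r^(-α-1) * (r ^ α * u r - c)
          = (r ^ α * r ^ (-α)) * u₁ r + c*α*r^(-α-1) := by ring
      rw [hwr, hFr, expand, e6, one_mul]
    have e10 : Real.exp (-ε₀ * r / 2) = Real.exp (-(ε₀/2) * r) := by congr 1; ring
    have egoal : u₁ r + c * α * r ^ (-α - 1) = u₁ r + c*α*r^(-α-1) := by ring
    rw [Real.norm_eq_abs, Real.norm_eq_abs, egoal, e7,
      abs_of_nonneg (Real.exp_pos _).le, e10]
    have h1 : |r ^ α * F r| ≤ K₂ * Real.exp (-(ε₀/2)*r) := by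
      have ha : r ^ α ≤ r ^ (2*α) := Real.rpow_le_rpow_of_exponent_le hr (by linarith)
      have hthis := hK2 r hr
      rw [abs_mul, abs_of_nonneg (Real.rpow_nonneg hr0.le (2*α))] at hthis
      rw [abs_mul, abs_of_nonneg (Real.rpow_nonneg hr0.le α)]
      calc r ^ α * |F r| ≤ r ^ (2*α) * |F r| := mul_le_mul_of_nonneg_right ha (abs_nonneg _)
      _ ≤ K₂ * Real.exp (-(ε₀/2)*r) := hthis
    have h2 : |α * r^(-α-1) * (w r - c)| ≤ α * (K₂/(ε₀/2)) * Real.exp (-(ε₀/2)*r) := by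
      have hle : r ^ (-α-1) ≤ 1 := Real.rpow_le_one_of_one_le_of_nonpos hr (by linarith)
      have h9 := hwc r hr
      rw [abs_mul, abs_mul, abs_of_nonneg hα, abs_of_nonneg (Real.rpow_nonneg hr0.le _)]
      have hstep : r ^ (-α-1) * |w r - c| ≤ K₂/(ε₀/2) * Real.exp (-(ε₀/2)*r) := by
        calc r ^ (-α-1) * |w r - c| ≤ |w r - c| := mul_le_of_le_one_left (abs_nonneg _) hle
        _ ≤ _ := h9
      calc α * r ^ (-α-1) * |w r - c| = α * (r ^ (-α-1) * |w r - c|) := by ring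
      _ ≤ α * (K₂/(ε₀/2) * Real.exp (-(ε₀/2)*r)) := mul_le_mul_of_nonneg_left hstep hα
      _ = α * (K₂/(ε₀/2)) * Real.exp (-(ε₀/2)*r) := by ring
    calc |r ^ α * F r - α * r^(-α-1) * (w r - c)|
        ≤ |r ^ α * F r| + |α * r^(-α-1) * (w r - c)| := abs_sub _ _
    _ ≤ K₂ * Real.exp (-(ε₀/2)*r) + α * (K₂/(ε₀/2)) * Real.exp (-(ε₀/2)*r) := add_le_add h1 h2
    _ = (K₂ + α*(K₂/(ε₀/2))) * Real.exp (-(ε₀/2)*r) := by ring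
end

section
/- Let W(r) = -α(α+1)/r² + W₂(r) with α ≥ 0 and W₂ ∈ C¹(0,∞) positive strictly decreasing with |W₂(r)| ≤ C e^{-ε₀ r}. If u ∈ C([0,∞)) with u(0) = 0 satisfies -u'' - W u = 0 distributionally on (0,∞) and |u(r)| ≤ C(1+r)^a for some 0 ≤ a < 1 (weak-growth condition), then there exist constants C₀, C₁ ∈ ℝ with u(r) = C₀ r^{α+1}/(2α+1) + C₁ r^{-α} + O(e^{-ε₀ r/2}) and u'(r) = C₀ (α+1) r^{α}/(2α+1) - C₁ α r^{-α-1} + O(e^{-ε₀ r/2}) as r → ∞. -/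
open MeasureTheory Set Filter Topology Asymptotics

lemma expIntIoi {c : ℝ} (hc : 0 < c) (r : ℝ) :
    ∫ s in Ioi r, Real.exp (-c * s) = Real.exp (-c * r) / c := by
  have hderiv : ∀ x ∈ Ici r, HasDerivAt (fun s => -(Real.exp (-c * s) / c))
      (Real.exp (-c * x)) x := by
    intro x _
    have h1 : HasDerivAt (fun s : ℝ => -c * s) (-c) x := by
      simpa using (hasDerivAt_id x).const_mul (-c)
    have h2 := (Real.hasDerivAt_exp (-c * x)).comp x h1
    have h3 := (h2.div_const c).neg
    refine h3.congr_deriv (Eq.symm ?_)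
    field_simp
  have hint : IntegrableOn (fun s => Real.exp (-c * s)) (Ioi r) :=
    exp_neg_integrableOn_Ioi r hc
  have htend : Tendsto (fun s => -(Real.exp (-c * s) / c)) atTop (𝓝 0) := by
    have h1 : Tendsto (fun s : ℝ => -c * s) atTop atBot :=
      tendsto_id.const_mul_atTop_of_neg (by linarith)
    have h2 := Real.tendsto_exp_atBot.comp h1
    have h3 := (h2.div_const c).neg
    simpa using h3
  have := integral_Ioi_of_hasDerivAt_of_tendsto' hderiv hint htend
  rw [this]; ring

set_option maxHeartbeats 1000000 in
theorem stmt13 (W₂ u : ℝ → ℝ) (α C ε₀ : ℝ) (hα : 0 ≤ α) (hC : 0 < C) (hε : 0 < ε₀)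
    (hW₂1 : ContDiffOn ℝ 1 W₂ (Ioi 0)) (hW₂pos : ∀ r > (0:ℝ), 0 < W₂ r)
    (hW₂dec : StrictAntiOn W₂ (Ioi 0))
    (hW₂b : ∀ r > (0:ℝ), |W₂ r| ≤ C * Real.exp (-ε₀ * r))
    (huc : ContinuousOn u (Ici 0)) (hu0 : u 0 = 0)
    (hu2 : ContDiffOn ℝ 2 u (Ioi 0))
    (hode : ∀ r > (0:ℝ),
      deriv (deriv u) r + (-(α * (α + 1)) / r^2 + W₂ r) * u r = 0)
    (hgrow : ∃ C' : ℝ, ∃ a : ℝ, 0 ≤ a ∧ a < 1 ∧ ∀ r ≥ (0:ℝ), |u r| ≤ C' * (1 + r) ^ a) :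
    ∃ C₀ C₁ : ℝ,
      (fun r => u r - (C₀ * r ^ (α + 1) / (2 * α + 1) + C₁ * r ^ (-α))) =O[atTop]
        (fun r => Real.exp (-ε₀ * r / 2)) ∧
      (fun r => deriv u r -
          (C₀ * (α + 1) * r ^ α / (2 * α + 1) - C₁ * α * r ^ (-α - 1))) =O[atTop]
        (fun r => Real.exp (-ε₀ * r / 2)) := by
  obtain ⟨C', a, ha0, ha1, hub⟩ := hgrow
  have hC' : 0 ≤ C' := by
    have h := hub 0 le_rfl
    simp at h
    exact le_trans (abs_nonneg _) h
  have hNpos : (0:ℝ) < 2 * α + 1 := by linarith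
  -- basic differentiability
  have hu1 : ContDiffOn ℝ 1 (deriv u) (Ioi 0) := hu2.deriv_of_isOpen isOpen_Ioi (by norm_num)
  have hudiff : ∀ r > (0:ℝ), HasDerivAt u (deriv u r) r := fun r hr =>
    ((hu2.differentiableOn (by norm_num)).differentiableAt (isOpen_Ioi.mem_nhds hr)).hasDerivAt
  have hu'diff : ∀ r > (0:ℝ), HasDerivAt (deriv u) (deriv (deriv u) r) r := fun r hr =>
    ((hu1.differentiableOn (by norm_num)).differentiableAt (isOpen_Ioi.mem_nhds hr)).hasDerivAt
  -- Wronskian-type functions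
  set W0 : ℝ → ℝ := fun r => u r * (-α * r ^ (-α - 1)) - deriv u r * r ^ (-α) with hW0def
  set W1 : ℝ → ℝ := fun r => u r * ((α + 1) * r ^ α) - deriv u r * r ^ (α + 1) with hW1def
  set G0 : ℝ → ℝ := fun s => W₂ s * u s * s ^ (-α) with hG0def
  set G1 : ℝ → ℝ := fun s => W₂ s * u s * s ^ (α + 1) with hG1def
  -- derivatives of the Wronskians
  have hW0' : ∀ r > (0:ℝ), HasDerivAt W0 (G0 r) r := by
    intro r hr
    have hψ : HasDerivAt (fun x : ℝ => x ^ (-α)) (-α * r ^ (-α - 1)) r :=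
      Real.hasDerivAt_rpow_const (Or.inl hr.ne')
    have hdψ : HasDerivAt (fun x : ℝ => -α * x ^ (-α - 1)) (-α * ((-α - 1) * r ^ (-α - 1 - 1))) r :=
      (Real.hasDerivAt_rpow_const (Or.inl hr.ne')).const_mul (-α)
    have h := ((hudiff r hr).mul hdψ).sub ((hu'diff r hr).mul hψ)
    refine h.congr_deriv (Eq.symm ?_)
    have he : r ^ (-α - 1 - 1) = r ^ (-α) / r ^ 2 := by
      rw [show -α - 1 - 1 = -α - 2 by ring, Real.rpow_sub hr, Real.rpow_two]
    have hode' : deriv (deriv u) r = α * (α + 1) / r ^ 2 * u r - W₂ r * u r := by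
      linear_combination (hode r hr)
    rw [hG0def]
    simp only
    rw [hode', he]
    have hr2 : r ^ 2 ≠ 0 := pow_ne_zero 2 hr.ne'
    field_simp
    ring
  have hW1' : ∀ r > (0:ℝ), HasDerivAt W1 (G1 r) r := by
    intro r hr
    have hφ : HasDerivAt (fun x : ℝ => x ^ (α + 1)) ((α + 1) * r ^ α) r := by
      simpa using Real.hasDerivAt_rpow_const (x := r) (p := α + 1) (Or.inl hr.ne')
    have hdφ : HasDerivAt (fun x : ℝ => (α + 1) * x ^ α) ((α + 1) * (α * r ^ (α - 1))) r :=
      (Real.hasDerivAt_rpow_const (Or.inl hr.ne')).const_mul (α + 1)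
    have h := ((hudiff r hr).mul hdφ).sub ((hu'diff r hr).mul hφ)
    refine h.congr_deriv (Eq.symm ?_)
    have he : r ^ (α - 1) = r ^ (α + 1) / r ^ 2 := by
      rw [show α - 1 = (α + 1) - 2 by ring, Real.rpow_sub hr, Real.rpow_two]
    have hode' : deriv (deriv u) r = α * (α + 1) / r ^ 2 * u r - W₂ r * u r := by
      linear_combination (hode r hr)
    rw [hG1def]
    simp only
    rw [hode', he]
    have hr2 : r ^ 2 ≠ 0 := pow_ne_zero 2 hr.ne'
    field_simp
    ring
  -- continuity of G0, G1
  have hWuc : ContinuousOn (fun s => W₂ s * u s) (Ioi 0) :=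
    hW₂1.continuousOn.mul (huc.mono Ioi_subset_Ici_self)
  have hG0c : ContinuousOn G0 (Ioi 0) := by
    apply hWuc.mul
    intro x hx
    exact (Real.continuousAt_rpow_const x _ (Or.inl (ne_of_gt hx))).continuousWithinAt
  have hG1c : ContinuousOn G1 (Ioi 0) := by
    apply hWuc.mul
    intro x hx
    exact (Real.continuousAt_rpow_const x _ (Or.inl (ne_of_gt hx))).continuousWithinAt
  -- master growth bound
  set M : ℝ := (4 * (α + 2) / ε₀) ^ (α + 2) with hMdef
  have hMpos : 0 < M := Real.rpow_pos_of_pos (by positivity) _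
  have hmaster : ∀ s : ℝ, 1 ≤ s → s ^ (α + 2) ≤ M * Real.exp (ε₀ * s / 4) := by
    intro s hs
    have hs0 : (0:ℝ) ≤ s := by linarith
    have hb0 : (0:ℝ) < α + 2 := by linarith
    have hx : ε₀ * s / (4 * (α + 2)) ≤ Real.exp (ε₀ * s / (4 * (α + 2))) := by
      have h := Real.add_one_le_exp (ε₀ * s / (4 * (α + 2)))
      have := (Real.exp_pos (ε₀ * s / (4 * (α + 2)))).le
      linarith
    have h1 : s ≤ 4 * (α + 2) / ε₀ * Real.exp (ε₀ * s / (4 * (α + 2))) := by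
      have h2 : s = 4 * (α + 2) / ε₀ * (ε₀ * s / (4 * (α + 2))) := by
        field_simp
      calc s = 4 * (α + 2) / ε₀ * (ε₀ * s / (4 * (α + 2))) := h2
        _ ≤ 4 * (α + 2) / ε₀ * Real.exp (ε₀ * s / (4 * (α + 2))) :=
            mul_le_mul_of_nonneg_left hx (by positivity)
    have h3 : s ^ (α + 2) ≤ (4 * (α + 2) / ε₀ * Real.exp (ε₀ * s / (4 * (α + 2)))) ^ (α + 2) :=
      Real.rpow_le_rpow hs0 h1 hb0.le
    have h4 : (4 * (α + 2) / ε₀ * Real.exp (ε₀ * s / (4 * (α + 2)))) ^ (α + 2)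
        = M * Real.exp (ε₀ * s / 4) := by
      rw [Real.mul_rpow (by positivity) (Real.exp_pos _).le, ← Real.exp_mul]
      rw [show ε₀ * s / (4 * (α + 2)) * (α + 2) = ε₀ * s / 4 by field_simp]
    rw [h4] at h3
    exact h3
  -- pointwise bound on W₂ * u
  have hkey : ∀ s : ℝ, 1 ≤ s → |W₂ s * u s| ≤ 2 * C * C' * (s * Real.exp (-ε₀ * s)) := by
    intro s hs
    have h1 : |W₂ s| ≤ C * Real.exp (-ε₀ * s) := hW₂b s (by linarith)
    have h3 : (1 + s) ^ a ≤ 2 * s := by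
      have h := Real.rpow_le_rpow_of_exponent_le (by linarith : (1:ℝ) ≤ 1 + s) ha1.le
      rw [Real.rpow_one] at h
      linarith
    have h4 : |u s| ≤ C' * (2 * s) := by
      refine le_trans (hub s (by linarith)) ?_
      nlinarith
    calc |W₂ s * u s| = |W₂ s| * |u s| := abs_mul _ _
      _ ≤ C * Real.exp (-ε₀ * s) * (C' * (2 * s)) :=
          mul_le_mul h1 h4 (abs_nonneg _) (by positivity)
      _ = 2 * C * C' * (s * Real.exp (-ε₀ * s)) := by ring
  -- pointwise bounds on G0 G1
  have hEmul : ∀ s : ℝ, Real.exp (ε₀ * s / 4) * Real.exp (-ε₀ * s)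
      = Real.exp (-(3 * ε₀ / 4) * s) := by
    intro s
    rw [← Real.exp_add]
    congr 1
    ring
  have hG0b : ∀ s : ℝ, 1 ≤ s → |G0 s| ≤ 2 * C * C' * M * Real.exp (-(3 * ε₀ / 4) * s) := by
    intro s hs
    have hs0 : (0:ℝ) < s := by linarith
    have h5 : s ^ (-α) ≤ 1 := Real.rpow_le_one_of_one_le_of_nonpos hs (by linarith)
    have h6 : (0:ℝ) ≤ s ^ (-α) := (Real.rpow_pos_of_pos hs0 _).le
    have h0 : |G0 s| ≤ 2 * C * C' * (s * Real.exp (-ε₀ * s)) := by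
      rw [hG0def]
      simp only
      calc |W₂ s * u s * s ^ (-α)| = |W₂ s * u s| * s ^ (-α) := by
            rw [abs_mul, abs_of_nonneg h6]
        _ ≤ 2 * C * C' * (s * Real.exp (-ε₀ * s)) * 1 :=
            mul_le_mul (hkey s hs) h5 h6 (by positivity)
        _ = _ := by ring
    have h7 : s ≤ M * Real.exp (ε₀ * s / 4) := by
      have h8 : s ^ (1:ℝ) ≤ s ^ (α + 2) :=
        Real.rpow_le_rpow_of_exponent_le hs (by linarith)
      rw [Real.rpow_one] at h8
      linarith [hmaster s hs]
    have hE := hEmul s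
    calc |G0 s| ≤ 2 * C * C' * (s * Real.exp (-ε₀ * s)) := h0
      _ ≤ 2 * C * C' * (M * Real.exp (ε₀ * s / 4) * Real.exp (-ε₀ * s)) := by
          have h9 : 0 ≤ 2 * C * C' := by positivity
          exact mul_le_mul_of_nonneg_left
            (mul_le_mul_of_nonneg_right h7 (Real.exp_pos _).le) h9
      _ = 2 * C * C' * M * Real.exp (-(3 * ε₀ / 4) * s) := by
          linear_combination (2 * C * C' * M) * hE
  have hG1b : ∀ s : ℝ, 1 ≤ s → |G1 s| ≤ 2 * C * C' * M * Real.exp (-(3 * ε₀ / 4) * s) := by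
    intro s hs
    have hs0 : (0:ℝ) < s := by linarith
    have h6 : (0:ℝ) ≤ s ^ (α + 1) := (Real.rpow_pos_of_pos hs0 _).le
    have hprod : s * s ^ (α + 1) = s ^ (α + 2) := by
      rw [show α + 2 = 1 + (α + 1) by ring, Real.rpow_add hs0 1 (α + 1), Real.rpow_one]
    have h0 : |G1 s| ≤ 2 * C * C' * (s ^ (α + 2) * Real.exp (-ε₀ * s)) := by
      rw [hG1def]
      simp only
      calc |W₂ s * u s * s ^ (α + 1)| = |W₂ s * u s| * s ^ (α + 1) := by
            rw [abs_mul, abs_of_nonneg h6]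
        _ ≤ 2 * C * C' * (s * Real.exp (-ε₀ * s)) * s ^ (α + 1) :=
            mul_le_mul_of_nonneg_right (hkey s hs) h6
        _ = 2 * C * C' * (s * s ^ (α + 1) * Real.exp (-ε₀ * s)) := by ring
        _ = _ := by linear_combination (2 * C * C' * Real.exp (-ε₀ * s)) * hprod
    have h7 := hmaster s hs
    have hE := hEmul s
    calc |G1 s| ≤ 2 * C * C' * (s ^ (α + 2) * Real.exp (-ε₀ * s)) := h0
      _ ≤ 2 * C * C' * (M * Real.exp (ε₀ * s / 4) * Real.exp (-ε₀ * s)) := by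
          have h9 : 0 ≤ 2 * C * C' := by positivity
          exact mul_le_mul_of_nonneg_left
            (mul_le_mul_of_nonneg_right h7 (Real.exp_pos _).le) h9
      _ = 2 * C * C' * M * Real.exp (-(3 * ε₀ / 4) * s) := by
          linear_combination (2 * C * C' * M) * hE
  -- integrability
  have hc34 : (0:ℝ) < 3 * ε₀ / 4 := by linarith
  have hexpInt : ∀ r : ℝ, IntegrableOn
      (fun s => 2 * C * C' * M * Real.exp (-(3 * ε₀ / 4) * s)) (Ioi r) := fun r =>
    (exp_neg_integrableOn_Ioi r hc34).const_mul _
  have hGint : ∀ (G : ℝ → ℝ), ContinuousOn G (Ioi 0) →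
      (∀ s : ℝ, 1 ≤ s → |G s| ≤ 2 * C * C' * M * Real.exp (-(3 * ε₀ / 4) * s)) →
      ∀ r : ℝ, 1 ≤ r → IntegrableOn G (Ioi r) := by
    intro G hGc hGb r hr
    apply Integrable.mono' (hexpInt r)
    · exact (hGc.mono fun x hx => lt_of_lt_of_le (by linarith) (mem_Ioi.mp hx).le).aestronglyMeasurable
        measurableSet_Ioi
    · filter_upwards [ae_restrict_mem measurableSet_Ioi] with s hs
      rw [Real.norm_eq_abs]
      exact hGb s (le_trans hr (le_of_lt hs))
  have hG0int := hGint G0 hG0c hG0b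
  have hG1int := hGint G1 hG1c hG1b
  -- tail bounds
  have hTail : ∀ (G : ℝ → ℝ),
      (∀ s : ℝ, 1 ≤ s → |G s| ≤ 2 * C * C' * M * Real.exp (-(3 * ε₀ / 4) * s)) →
      (∀ r : ℝ, 1 ≤ r → IntegrableOn G (Ioi r)) →
      ∀ r : ℝ, 1 ≤ r → |∫ s in Ioi r, G s| ≤
        2 * C * C' * M / (3 * ε₀ / 4) * Real.exp (-(3 * ε₀ / 4) * r) := by
    intro G hGb hGi r hr
    have h1 : |∫ s in Ioi r, G s| ≤ ∫ s in Ioi r, |G s| := by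
      simpa [Real.norm_eq_abs] using
        norm_integral_le_integral_norm (μ := volume.restrict (Ioi r)) G
    have h2 : ∫ s in Ioi r, |G s| ≤
        ∫ s in Ioi r, 2 * C * C' * M * Real.exp (-(3 * ε₀ / 4) * s) := by
      apply setIntegral_mono_on (hGi r hr).abs (hexpInt r) measurableSet_Ioi
      intro s hs
      exact hGb s (le_trans hr (le_of_lt hs))
    have h3 : ∫ s in Ioi r, 2 * C * C' * M * Real.exp (-(3 * ε₀ / 4) * s)
        = 2 * C * C' * M * (Real.exp (-(3 * ε₀ / 4) * r) / (3 * ε₀ / 4)) := by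
      rw [integral_const_mul, expIntIoi hc34]
    have h4 : 2 * C * C' * M * (Real.exp (-(3 * ε₀ / 4) * r) / (3 * ε₀ / 4))
        = 2 * C * C' * M / (3 * ε₀ / 4) * Real.exp (-(3 * ε₀ / 4) * r) := by ring
    linarith
  have hT0 := hTail G0 hG0b hG0int
  have hT1 := hTail G1 hG1b hG1int
  -- FTC and splitting
  have hFTC : ∀ (W G : ℝ → ℝ), (∀ r > (0:ℝ), HasDerivAt W (G r) r) →
      ContinuousOn G (Ioi 0) →
      ∀ r : ℝ, 1 ≤ r → W r - W 1 = ∫ s in Ioc 1 r, G s := by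
    intro W G hW hGc r hr
    have hsub : uIcc (1:ℝ) r ⊆ Ioi 0 := by
      rw [uIcc_of_le hr]
      exact fun x hx => lt_of_lt_of_le one_pos hx.1
    have h := intervalIntegral.integral_eq_sub_of_hasDerivAt
      (f := W) (f' := G) (a := 1) (b := r)
      (fun x hx => hW x (hsub hx)) ((hGc.mono hsub).intervalIntegrable)
    rw [intervalIntegral.integral_of_le hr] at h
    linarith [h]
  have hsplit : ∀ (W G : ℝ → ℝ), (∀ r > (0:ℝ), HasDerivAt W (G r) r) →
      ContinuousOn G (Ioi 0) → (∀ r : ℝ, 1 ≤ r → IntegrableOn G (Ioi r)) →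
      ∀ r : ℝ, 1 ≤ r →
        (W 1 + ∫ s in Ioi 1, G s) - W r = ∫ s in Ioi r, G s := by
    intro W G hW hGc hGi r hr
    have hU : Ioc 1 r ∪ Ioi r = Ioi (1:ℝ) := Ioc_union_Ioi_eq_Ioi hr
    have h := MeasureTheory.setIntegral_union (Ioc_disjoint_Ioi le_rfl) measurableSet_Ioi
        ((hGi 1 le_rfl).mono_set Ioc_subset_Ioi_self) (hGi r hr)
    rw [hU] at h
    have h2 := hFTC W G hW hGc r hr
    linarith
  have hsplit0 := hsplit W0 G0 hW0' hG0c hG0int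
  have hsplit1 := hsplit W1 G1 hW1' hG1c hG1int
  -- the constants
  set L0 : ℝ := W0 1 + ∫ s in Ioi 1, G0 s with hL0def
  set L1 : ℝ := W1 1 + ∫ s in Ioi 1, G1 s with hL1def
  refine ⟨-L0, L1 / (2 * α + 1), ?_, ?_⟩
  · -- the function itself
    rw [isBigO_iff]
    refine ⟨(2 * C * C' * M / (3 * ε₀ / 4)) * (M + 1) / (2 * α + 1), ?_⟩
    filter_upwards [eventually_ge_atTop 1] with r hr
    have hr0 : (0:ℝ) < r := by linarith
    have e1 : r ^ (-α - 1) * r ^ (α + 1) = 1 := by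
      rw [← Real.rpow_add hr0, show -α - 1 + (α + 1) = 0 by ring, Real.rpow_zero]
    have e2 : r ^ α * r ^ (-α) = 1 := by
      rw [← Real.rpow_add hr0, show α + (-α) = 0 by ring, Real.rpow_zero]
    have hu_eq : (2 * α + 1) * u r = W1 r * r ^ (-α) - W0 r * r ^ (α + 1) := by
      rw [hW0def, hW1def]
      simp only
      linear_combination (-(u r) * (α + 1)) * e2 + (-(u r) * α) * e1
    have hW0r : W0 r = L0 - ∫ s in Ioi r, G0 s := by
      have := hsplit0 r hr; linarith
    have hW1r : W1 r = L1 - ∫ s in Ioi r, G1 s := by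
      have := hsplit1 r hr; linarith
    have hkey2 : u r - (-L0 * r ^ (α + 1) / (2 * α + 1) + L1 / (2 * α + 1) * r ^ (-α))
        = ((∫ s in Ioi r, G0 s) * r ^ (α + 1) - (∫ s in Ioi r, G1 s) * r ^ (-α))
          / (2 * α + 1) := by
      rw [hW0r, hW1r] at hu_eq
      have hu_eq2 : u r = ((L1 - ∫ s in Ioi r, G1 s) * r ^ (-α)
          - (L0 - ∫ s in Ioi r, G0 s) * r ^ (α + 1)) / (2 * α + 1) := by
        rw [eq_div_iff hNpos.ne']
        linear_combination hu_eq
      rw [hu_eq2]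
      ring
    rw [hkey2]
    -- now estimate
    have hφb : r ^ (α + 1) ≤ M * Real.exp (ε₀ * r / 4) := by
      have h8 : r ^ (α + 1) ≤ r ^ (α + 2) :=
        Real.rpow_le_rpow_of_exponent_le hr (by linarith)
      linarith [hmaster r hr]
    have hψb : r ^ (-α) ≤ 1 := Real.rpow_le_one_of_one_le_of_nonpos hr (by linarith)
    have hφ0 : (0:ℝ) ≤ r ^ (α + 1) := (Real.rpow_pos_of_pos hr0 _).le
    have hψ0 : (0:ℝ) ≤ r ^ (-α) := (Real.rpow_pos_of_pos hr0 _).le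
    have hA0 := hT0 r hr
    have hA1 := hT1 r hr
    set Kt : ℝ := 2 * C * C' * M / (3 * ε₀ / 4) with hKtdef
    have hKt0 : 0 ≤ Kt := by rw [hKtdef]; positivity
    have hE1 : Real.exp (-(3 * ε₀ / 4) * r) * Real.exp (ε₀ * r / 4)
        = Real.exp (-ε₀ * r / 2) := by
      rw [← Real.exp_add]; congr 1; ring
    have hE2 : Real.exp (-(3 * ε₀ / 4) * r) ≤ Real.exp (-ε₀ * r / 2) := by
      apply Real.exp_le_exp.mpr; nlinarith
    have hB0 : |(∫ s in Ioi r, G0 s) * r ^ (α + 1)|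
        ≤ Kt * M * Real.exp (-ε₀ * r / 2) := by
      rw [abs_mul, abs_of_nonneg hφ0]
      calc |∫ s in Ioi r, G0 s| * r ^ (α + 1)
          ≤ Kt * Real.exp (-(3 * ε₀ / 4) * r) * (M * Real.exp (ε₀ * r / 4)) :=
            mul_le_mul hA0 hφb hφ0 (by positivity)
        _ = Kt * M * Real.exp (-ε₀ * r / 2) := by
            linear_combination Kt * M * hE1
    have hB1 : |(∫ s in Ioi r, G1 s) * r ^ (-α)| ≤ Kt * Real.exp (-ε₀ * r / 2) := by
      rw [abs_mul, abs_of_nonneg hψ0]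
      calc |∫ s in Ioi r, G1 s| * r ^ (-α)
          ≤ Kt * Real.exp (-(3 * ε₀ / 4) * r) * 1 :=
            mul_le_mul hA1 hψb hψ0 (by positivity)
        _ ≤ Kt * Real.exp (-ε₀ * r / 2) := by nlinarith
    rw [Real.norm_eq_abs, Real.norm_eq_abs, abs_of_pos (Real.exp_pos _), abs_div,
      abs_of_pos hNpos]
    rw [div_le_iff₀ hNpos]  -- ?
    calc |(∫ s in Ioi r, G0 s) * r ^ (α + 1) - (∫ s in Ioi r, G1 s) * r ^ (-α)|
        ≤ |(∫ s in Ioi r, G0 s) * r ^ (α + 1)| + |(∫ s in Ioi r, G1 s) * r ^ (-α)| :=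
          abs_sub _ _
      _ ≤ Kt * M * Real.exp (-ε₀ * r / 2) + Kt * Real.exp (-ε₀ * r / 2) := by linarith
      _ = Kt * (M + 1) / (2 * α + 1) * Real.exp (-ε₀ * r / 2) * (2 * α + 1) := by
          field_simp
  · -- the derivative
    rw [isBigO_iff]
    refine ⟨(2 * C * C' * M / (3 * ε₀ / 4)) * ((α + 1) * M + α) / (2 * α + 1), ?_⟩
    filter_upwards [eventually_ge_atTop 1] with r hr
    have hr0 : (0:ℝ) < r := by linarith
    have e1 : r ^ (-α - 1) * r ^ (α + 1) = 1 := by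
      rw [← Real.rpow_add hr0, show -α - 1 + (α + 1) = 0 by ring, Real.rpow_zero]
    have e2 : r ^ α * r ^ (-α) = 1 := by
      rw [← Real.rpow_add hr0, show α + (-α) = 0 by ring, Real.rpow_zero]
    have hu_eq : (2 * α + 1) * deriv u r
        = W1 r * (-α * r ^ (-α - 1)) - W0 r * ((α + 1) * r ^ α) := by
      rw [hW0def, hW1def]
      simp only
      linear_combination (-(deriv u r) * α) * e1 + (-(deriv u r) * (α + 1)) * e2
    have hW0r : W0 r = L0 - ∫ s in Ioi r, G0 s := by
      have := hsplit0 r hr; linarith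
    have hW1r : W1 r = L1 - ∫ s in Ioi r, G1 s := by
      have := hsplit1 r hr; linarith
    have hkey2 : deriv u r - (-L0 * (α + 1) * r ^ α / (2 * α + 1)
          - L1 / (2 * α + 1) * α * r ^ (-α - 1))
        = ((∫ s in Ioi r, G0 s) * ((α + 1) * r ^ α)
          + (∫ s in Ioi r, G1 s) * (α * r ^ (-α - 1))) / (2 * α + 1) := by
      rw [hW0r, hW1r] at hu_eq
      have hu_eq2 : deriv u r = ((L1 - ∫ s in Ioi r, G1 s) * (-α * r ^ (-α - 1))
          - (L0 - ∫ s in Ioi r, G0 s) * ((α + 1) * r ^ α)) / (2 * α + 1) := by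
        rw [eq_div_iff hNpos.ne']
        linear_combination hu_eq
      rw [hu_eq2]
      ring
    rw [hkey2]
    have hφb : r ^ α ≤ M * Real.exp (ε₀ * r / 4) := by
      have h8 : r ^ α ≤ r ^ (α + 2) :=
        Real.rpow_le_rpow_of_exponent_le hr (by linarith)
      linarith [hmaster r hr]
    have hψb : r ^ (-α - 1) ≤ 1 := Real.rpow_le_one_of_one_le_of_nonpos hr (by linarith)
    have hφ0 : (0:ℝ) ≤ r ^ α := (Real.rpow_pos_of_pos hr0 _).le
    have hψ0 : (0:ℝ) ≤ r ^ (-α - 1) := (Real.rpow_pos_of_pos hr0 _).le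
    have hA0 := hT0 r hr
    have hA1 := hT1 r hr
    set Kt : ℝ := 2 * C * C' * M / (3 * ε₀ / 4) with hKtdef
    have hKt0 : 0 ≤ Kt := by rw [hKtdef]; positivity
    have hE1 : Real.exp (-(3 * ε₀ / 4) * r) * Real.exp (ε₀ * r / 4)
        = Real.exp (-ε₀ * r / 2) := by
      rw [← Real.exp_add]; congr 1; ring
    have hE2 : Real.exp (-(3 * ε₀ / 4) * r) ≤ Real.exp (-ε₀ * r / 2) := by
      apply Real.exp_le_exp.mpr; nlinarith
    have hB0 : |(∫ s in Ioi r, G0 s) * ((α + 1) * r ^ α)|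
        ≤ Kt * ((α + 1) * M) * Real.exp (-ε₀ * r / 2) := by
      rw [abs_mul, abs_of_nonneg (by positivity : (0:ℝ) ≤ (α + 1) * r ^ α)]
      calc |∫ s in Ioi r, G0 s| * ((α + 1) * r ^ α)
          ≤ Kt * Real.exp (-(3 * ε₀ / 4) * r) * ((α + 1) * (M * Real.exp (ε₀ * r / 4))) := by
            apply mul_le_mul hA0 ?_ (by positivity) (by positivity)
            exact mul_le_mul_of_nonneg_left hφb (by linarith)
        _ = Kt * ((α + 1) * M) * Real.exp (-ε₀ * r / 2) := by
            linear_combination Kt * ((α + 1) * M) * hE1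
    have hB1 : |(∫ s in Ioi r, G1 s) * (α * r ^ (-α - 1))|
        ≤ Kt * α * Real.exp (-ε₀ * r / 2) := by
      rw [abs_mul, abs_of_nonneg (by positivity : (0:ℝ) ≤ α * r ^ (-α - 1))]
      calc |∫ s in Ioi r, G1 s| * (α * r ^ (-α - 1))
          ≤ Kt * Real.exp (-(3 * ε₀ / 4) * r) * (α * 1) := by
            apply mul_le_mul hA1 ?_ (by positivity) (by positivity)
            exact mul_le_mul_of_nonneg_left hψb hα
        _ = Kt * α * Real.exp (-(3 * ε₀ / 4) * r) := by ring
        _ ≤ Kt * α * Real.exp (-ε₀ * r / 2) :=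
            mul_le_mul_of_nonneg_left hE2 (mul_nonneg hKt0 hα)
    rw [Real.norm_eq_abs, Real.norm_eq_abs, abs_of_pos (Real.exp_pos _), abs_div,
      abs_of_pos hNpos]
    rw [div_le_iff₀ hNpos]
    calc |(∫ s in Ioi r, G0 s) * ((α + 1) * r ^ α)
          + (∫ s in Ioi r, G1 s) * (α * r ^ (-α - 1))|
        ≤ |(∫ s in Ioi r, G0 s) * ((α + 1) * r ^ α)|
          + |(∫ s in Ioi r, G1 s) * (α * r ^ (-α - 1))| := abs_add_le _ _
      _ ≤ Kt * ((α + 1) * M) * Real.exp (-ε₀ * r / 2)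
          + Kt * α * Real.exp (-ε₀ * r / 2) := by linarith
      _ = Kt * ((α + 1) * M + α) / (2 * α + 1) * Real.exp (-ε₀ * r / 2) * (2 * α + 1) := by
          field_simp
end

section
/- Let u ∈ H¹(0,∞) solve -u'' + α(α+1)u/r² - W₂(r)u = 0 distributionally, where W₂ decays like e^{-ε₀ r} and the full potential behaves like r^{-2} at infinity. Then |u'(R)| ≤ C R^{-3/2} and |u(R)| ≤ C R^{-1/2} as R → ∞. -/
open MeasureTheory Set Filter

lemma limit_zero_of_memL2 {f : ℝ → ℝ} {L : ℝ}
    (hf : MemLp f 2 (volume.restrict (Ioi 0)))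
    (hlim : Tendsto f atTop (nhds L)) : L = 0 := by
  by_contra hL
  have hsq : IntegrableOn (fun x => f x ^ 2) (Ioi 0) volume := hf.integrable_sq
  have h2 : Tendsto (fun x => f x ^ 2) atTop (nhds (L ^ 2)) := hlim.pow 2
  have hLpos : 0 < L ^ 2 := by positivity
  have hev : ∀ᶠ x in atTop, L ^ 2 / 2 < f x ^ 2 :=
    h2.eventually_const_lt (by linarith)
  obtain ⟨N, hN⟩ := eventually_atTop.1 hev
  set N' := max N 1 with hN'
  have hint : IntegrableOn (fun x => f x ^ 2) (Ioi N') volume :=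
    hsq.mono_set (Ioi_subset_Ioi (by positivity))
  have hconst : Integrable (fun _ : ℝ => L ^ 2 / 2) (volume.restrict (Ioi N')) := by
    refine hint.mono' aestronglyMeasurable_const ?_
    refine (ae_restrict_iff' measurableSet_Ioi).2 (ae_of_all _ fun x hx => ?_)
    have : N ≤ x := le_trans (le_max_left _ _) (le_of_lt hx)
    have := hN x this
    rw [Real.norm_eq_abs, abs_of_nonneg (by positivity)]
    linarith
  rw [integrable_const_iff] at hconst
  rcases hconst with h | h
  · exact absurd h (by positivity)
  · have h := h.measure_univ_lt_top
    rw [Measure.restrict_apply_univ, Real.volume_Ioi] at h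
    exact absurd h (by simp)

theorem stmt15 (W₂ u : ℝ → ℝ) (α C ε₀ : ℝ) (hα : 0 ≤ α) (hC : 0 < C) (hε : 0 < ε₀)
    (hW₂1 : ContDiffOn ℝ 1 W₂ (Ioi 0)) (hW₂pos : ∀ r > (0:ℝ), 0 < W₂ r)
    (hW₂dec : StrictAntiOn W₂ (Ioi 0))
    (hW₂b : ∀ r > (0:ℝ), |W₂ r| ≤ C * Real.exp (-ε₀ * r))
    (huL2 : MemLp u 2 (volume.restrict (Ioi 0)))
    (hu'L2 : MemLp (deriv u) 2 (volume.restrict (Ioi 0)))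
    (hu2 : ContDiffOn ℝ 2 u (Ioi 0))
    (hode : ∀ r > (0:ℝ),
      deriv (deriv u) r - α * (α + 1) / r^2 * u r + W₂ r * u r = 0) :
    ∃ C' : ℝ, ∀ R ≥ (1:ℝ),
      |deriv u R| ≤ C' * R ^ (-(3:ℝ)/2) ∧ |u R| ≤ C' * R ^ (-(1:ℝ)/2) := by
  -- smoothness facts
  have hu1 : ContDiffOn ℝ 1 (deriv u) (Ioi 0) :=
    hu2.deriv_of_isOpen isOpen_Ioi (by norm_num)
  have hucont : ContinuousOn u (Ioi 0) := hu2.continuousOn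
  have hu'cont : ContinuousOn (deriv u) (Ioi 0) := hu1.continuousOn
  have hudiff : ∀ x ∈ Ioi (0:ℝ), HasDerivAt u (deriv u x) x := fun x hx =>
    ((hu2.differentiableOn (by norm_num)).differentiableAt (Ioi_mem_nhds hx)).hasDerivAt
  have hu'diff : ∀ x ∈ Ioi (0:ℝ), HasDerivAt (deriv u) (deriv (deriv u) x) x := fun x hx =>
    ((hu1.differentiableOn (by norm_num)).differentiableAt (Ioi_mem_nhds hx)).hasDerivAt
  set W : ℝ → ℝ := fun r => α * (α + 1) / r ^ 2 - W₂ r with hWdef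
  have hWu : ∀ x ∈ Ioi (0:ℝ), deriv (deriv u) x = W x * u x := by
    intro x hx
    have h := hode x hx
    simp only [hWdef]
    linear_combination h
  have hWcont : ContinuousOn W (Ioi 0) := by
    apply ContinuousOn.sub _ hW₂1.continuousOn
    exact continuousOn_const.div (continuous_pow 2).continuousOn
      (fun x hx => pow_ne_zero 2 (ne_of_gt hx))
  set K : ℝ := α * (α + 1) + 4 * C / ε₀ ^ 2 with hKdef
  have hK0 : 0 ≤ K := by positivity
  have hWb : ∀ r ≥ (1:ℝ), |W r| ≤ K / r ^ 2 := by
    intro r hr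
    have hr0 : (0:ℝ) < r := by linarith
    have h1 : |W₂ r| ≤ C * Real.exp (-ε₀ * r) := hW₂b r hr0
    have hx0 : 0 < ε₀ * r := by positivity
    have hexp2 : (ε₀ * r) ^ 2 / 4 ≤ Real.exp (ε₀ * r) := by
      have h3 : ε₀ * r / 2 + 1 ≤ Real.exp (ε₀ * r / 2) := Real.add_one_le_exp _
      have h4 : Real.exp (ε₀ * r) = Real.exp (ε₀ * r / 2) ^ 2 := by
        rw [← Real.exp_nat_mul]; congr 1; push_cast; ring
      nlinarith [Real.exp_pos (ε₀ * r / 2)]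
    have hexp : Real.exp (-ε₀ * r) ≤ 4 / (ε₀ * r) ^ 2 := by
      rw [neg_mul, Real.exp_neg]
      calc (Real.exp (ε₀ * r))⁻¹ ≤ ((ε₀ * r) ^ 2 / 4)⁻¹ :=
            inv_anti₀ (by positivity) hexp2
        _ = 4 / (ε₀ * r) ^ 2 := by rw [inv_div]
    have h5 : |W r| ≤ |α * (α + 1) / r ^ 2| + |W₂ r| := abs_sub _ _
    have hnum : (0:ℝ) ≤ α * (α + 1) / r ^ 2 := div_nonneg (by nlinarith) (by positivity)
    rw [abs_of_nonneg hnum] at h5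
    have h6 : C * Real.exp (-ε₀ * r) ≤ C * (4 / (ε₀ * r) ^ 2) := by
      exact mul_le_mul_of_nonneg_left hexp hC.le
    have h7 : C * (4 / (ε₀ * r) ^ 2) = (4 * C / ε₀ ^ 2) / r ^ 2 := by
      field_simp
    have h8 : K / r ^ 2 = α * (α + 1) / r ^ 2 + (4 * C / ε₀ ^ 2) / r ^ 2 := by
      rw [hKdef]; ring
    rw [h8]
    calc |W r| ≤ α * (α + 1) / r ^ 2 + |W₂ r| := h5
      _ ≤ α * (α + 1) / r ^ 2 + C * Real.exp (-ε₀ * r) := by linarith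
      _ ≤ _ := by rw [← h7] at *; linarith
  set M : ℝ := ∫ x in Ioi (0:ℝ), u x ^ 2 with hMdef
  have huSq : IntegrableOn (fun x => u x ^ 2) (Ioi 0) volume := huL2.integrable_sq
  have hM0 : 0 ≤ M := setIntegral_nonneg measurableSet_Ioi fun x _ => sq_nonneg _
  set c₁ : ℝ := K ^ 2 / 6 + M / 2 with hc₁def
  have hc₁0 : 0 ≤ c₁ := by positivity
  -- the key integral bound
  have hWuInt : ∀ R ≥ (1:ℝ), IntegrableOn (fun r => W r * u r) (Ioi R) volume ∧
      ∫ r in Ioi R, |W r * u r| ≤ c₁ * R ^ (-(3:ℝ)/2) := by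
    intro R hR
    have hR0 : (0:ℝ) < R := lt_of_lt_of_le one_pos hR
    set g : ℝ → ℝ := fun r =>
      (R ^ ((3:ℝ)/2) * (K ^ 2 * r ^ (-(4:ℝ))) + R ^ (-(3:ℝ)/2) * u r ^ 2) / 2 with hgdef
    have hrpow4 : IntegrableOn (fun r : ℝ => r ^ (-(4:ℝ))) (Ioi R) volume :=
      integrableOn_Ioi_rpow_of_lt (by norm_num) hR0
    have hgint : IntegrableOn g (Ioi R) volume := by
      apply Integrable.div_const
      exact ((hrpow4.const_mul (K ^ 2)).const_mul _).add
        ((huSq.mono_set (Ioi_subset_Ioi hR0.le)).const_mul _)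
    have hbound : ∀ r ∈ Ioi R, |W r * u r| ≤ g r := by
      intro r hr
      have hrR : R < r := hr
      have hr1 : (1:ℝ) ≤ r := le_trans hR hrR.le
      have hr0 : (0:ℝ) < r := lt_trans hR0 hrR
      have hW := hWb r hr1
      have ht : 0 < R ^ ((3:ℝ)/2) := Real.rpow_pos_of_pos hR0 _
      have ht' : R ^ (-(3:ℝ)/2) = (R ^ ((3:ℝ)/2))⁻¹ := by
        rw [← Real.rpow_neg hR0.le]; norm_num
      have h1 : |W r * u r| ≤
          (R ^ ((3:ℝ)/2) * W r ^ 2 + R ^ (-(3:ℝ)/2) * u r ^ 2) / 2 := by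
        rw [abs_mul, ht']
        set t := R ^ ((3:ℝ)/2) with htdef
        have hab : Real.sqrt t * Real.sqrt t⁻¹ = 1 := by
          rw [← Real.sqrt_mul ht.le, mul_inv_cancel₀ ht.ne', Real.sqrt_one]
        have h2ab := two_mul_le_add_sq (Real.sqrt t * |W r|) (Real.sqrt t⁻¹ * |u r|)
        have ha2 : (Real.sqrt t * |W r|) ^ 2 = t * W r ^ 2 := by
          rw [mul_pow, Real.sq_sqrt ht.le, sq_abs]
        have hb2 : (Real.sqrt t⁻¹ * |u r|) ^ 2 = t⁻¹ * u r ^ 2 := by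
          rw [mul_pow, Real.sq_sqrt (inv_nonneg.2 ht.le), sq_abs]
        have hprod : 2 * (Real.sqrt t * |W r|) * (Real.sqrt t⁻¹ * |u r|)
            = 2 * (|W r| * |u r|) := by
          calc 2 * (Real.sqrt t * |W r|) * (Real.sqrt t⁻¹ * |u r|)
              = Real.sqrt t * Real.sqrt t⁻¹ * (2 * (|W r| * |u r|)) := by ring
            _ = 2 * (|W r| * |u r|) := by rw [hab, one_mul]
        rw [ha2, hb2, hprod] at h2ab
        linarith
      have h2 : W r ^ 2 ≤ K ^ 2 * r ^ (-(4:ℝ)) := by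
        have hWsq : W r ^ 2 ≤ (K / r ^ 2) ^ 2 := by
          have h := pow_le_pow_left₀ (abs_nonneg (W r)) hW 2
          rwa [sq_abs] at h
        have heq : (K / r ^ 2 : ℝ) ^ 2 = K ^ 2 * r ^ (-(4:ℝ)) := by
          rw [Real.rpow_neg hr0.le, show ((4:ℝ)) = ((4:ℕ):ℝ) by norm_num,
            Real.rpow_natCast]
          field_simp
        exact hWsq.trans heq.le
      calc |W r * u r| ≤ _ := h1
        _ ≤ g r := by
            simp only [hgdef]
            have h3 := mul_le_mul_of_nonneg_left h2 ht.le
            linarith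
    have hmeas : AEStronglyMeasurable (fun r => W r * u r) (volume.restrict (Ioi R)) :=
      ((hWcont.mul hucont).mono (Ioi_subset_Ioi hR0.le)).aestronglyMeasurable
        measurableSet_Ioi
    have hWuI : IntegrableOn (fun r => W r * u r) (Ioi R) volume := by
      refine hgint.mono' hmeas ?_
      refine (ae_restrict_iff' measurableSet_Ioi).2 (ae_of_all _ fun r hr => ?_)
      rw [Real.norm_eq_abs]
      exact hbound r hr
    refine ⟨hWuI, ?_⟩
    have hIabs : ∫ r in Ioi R, |W r * u r| ≤ ∫ r in Ioi R, g r :=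
      setIntegral_mono_on hWuI.abs hgint measurableSet_Ioi hbound
    have hIg : ∫ r in Ioi R, g r ≤ c₁ * R ^ (-(3:ℝ)/2) := by
      have hval : ∫ r in Ioi R, r ^ (-(4:ℝ)) = R ^ (-(3:ℝ)) / 3 := by
        rw [integral_Ioi_rpow_of_lt (by norm_num) hR0]
        norm_num
      have huval : ∫ r in Ioi R, u r ^ 2 ≤ M := by
        refine setIntegral_mono_set huSq ?_ ?_
        · exact Filter.Eventually.of_forall fun x => sq_nonneg _
        · exact HasSubset.Subset.eventuallyLE (Ioi_subset_Ioi hR0.le)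
      have hsplit : ∫ r in Ioi R, g r =
          (R ^ ((3:ℝ)/2) * (K ^ 2 * (R ^ (-(3:ℝ)) / 3)) +
            R ^ (-(3:ℝ)/2) * ∫ r in Ioi R, u r ^ 2) / 2 := by
        rw [hgdef]
        simp only [integral_div]
        rw [integral_add (((hrpow4.const_mul (K ^ 2)).const_mul _))
          ((huSq.mono_set (Ioi_subset_Ioi hR0.le)).const_mul _)]
        rw [integral_const_mul, integral_const_mul, integral_const_mul, hval]
      rw [hsplit]
      have hkey : R ^ ((3:ℝ)/2) * R ^ (-(3:ℝ)) = R ^ (-(3:ℝ)/2) := by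
        rw [← Real.rpow_add hR0]; norm_num
      have hrp : 0 < R ^ (-(3:ℝ)/2) := Real.rpow_pos_of_pos hR0 _
      calc (R ^ ((3:ℝ)/2) * (K ^ 2 * (R ^ (-(3:ℝ)) / 3)) +
            R ^ (-(3:ℝ)/2) * ∫ r in Ioi R, u r ^ 2) / 2
          ≤ (R ^ ((3:ℝ)/2) * (K ^ 2 * (R ^ (-(3:ℝ)) / 3)) +
            R ^ (-(3:ℝ)/2) * M) / 2 := by gcongr
        _ = c₁ * R ^ (-(3:ℝ)/2) := by
            rw [hc₁def, show R ^ ((3:ℝ)/2) * (K ^ 2 * (R ^ (-(3:ℝ)) / 3)) =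
              K ^ 2 / 3 * (R ^ ((3:ℝ)/2) * R ^ (-(3:ℝ))) by ring, hkey]
            ring
    linarith
    -- FTC for deriv u
  have hsub : ∀ R ≥ (1:ℝ), ∀ R₁ ≥ R, uIcc R R₁ ⊆ Ioi (0:ℝ) := by
    intro R hR R₁ hR₁
    rw [uIcc_of_le hR₁]
    intro x hx
    exact lt_of_lt_of_le (lt_of_lt_of_le one_pos hR) hx.1
  have hFTC : ∀ R ≥ (1:ℝ), ∀ R₁ ≥ R,
      deriv u R₁ - deriv u R = ∫ r in R..R₁, W r * u r := by
    intro R hR R₁ hR₁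
    refine (intervalIntegral.integral_eq_sub_of_hasDerivAt
      (f := deriv u) (f' := fun r => W r * u r) ?_ ?_).symm
    · intro x hx
      have hx0 := hsub R hR R₁ hR₁ hx
      have h := hu'diff x hx0
      rwa [hWu x hx0] at h
    · exact ((hWcont.mul hucont).mono (hsub R hR R₁ hR₁)).intervalIntegrable
  -- the limit of deriv u at infinity
  have htend1 : Tendsto (fun R₁ => ∫ r in (1:ℝ)..R₁, W r * u r) atTop
      (nhds (∫ r in Ioi (1:ℝ), W r * u r)) :=
    intervalIntegral_tendsto_integral_Ioi 1 (hWuInt 1 le_rfl).1 tendsto_id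
  have hu'tend : Tendsto (deriv u) atTop
      (nhds (deriv u 1 + ∫ r in Ioi (1:ℝ), W r * u r)) := by
    refine ((htend1.const_add (deriv u 1)).congr' ?_)
    filter_upwards [eventually_ge_atTop (1:ℝ)] with x hx
    have := hFTC 1 le_rfl x hx
    linarith
  have hL0 : deriv u 1 + ∫ r in Ioi (1:ℝ), W r * u r = 0 :=
    limit_zero_of_memL2 hu'L2 hu'tend
  rw [hL0] at hu'tend
  -- representation of deriv u
  have hder_eq : ∀ R ≥ (1:ℝ), deriv u R = -∫ r in Ioi R, W r * u r := by
    intro R hR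
    have h1 : Tendsto (fun R₁ => deriv u R₁ - deriv u R) atTop
        (nhds (0 - deriv u R)) := hu'tend.sub_const _
    have h2 : Tendsto (fun R₁ => ∫ r in R..R₁, W r * u r) atTop
        (nhds (∫ r in Ioi R, W r * u r)) :=
      intervalIntegral_tendsto_integral_Ioi R (hWuInt R hR).1 tendsto_id
    have h3 : (fun R₁ => deriv u R₁ - deriv u R) =ᶠ[atTop]
        fun R₁ => ∫ r in R..R₁, W r * u r := by
      filter_upwards [eventually_ge_atTop R] with x hx using hFTC R hR x hx
    have h4 := tendsto_nhds_unique (h1.congr' h3) h2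
    linarith
  -- bound on deriv u
  have hu'bound : ∀ R ≥ (1:ℝ), |deriv u R| ≤ c₁ * R ^ (-(3:ℝ)/2) := by
    intro R hR
    rw [hder_eq R hR, abs_neg]
    calc |∫ r in Ioi R, W r * u r| ≤ ∫ r in Ioi R, |W r * u r| := by
          simpa only [Real.norm_eq_abs] using
            norm_integral_le_integral_norm (μ := volume.restrict (Ioi R))
              (f := fun r => W r * u r)
      _ ≤ c₁ * R ^ (-(3:ℝ)/2) := (hWuInt R hR).2
  -- integrability of deriv u on tails
  have hu'int : ∀ R ≥ (1:ℝ), IntegrableOn (deriv u) (Ioi R) volume := by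
    intro R hR
    have hR0 : (0:ℝ) < R := lt_of_lt_of_le one_pos hR
    refine ((integrableOn_Ioi_rpow_of_lt
      (by norm_num : -(3:ℝ)/2 < -1) hR0).const_mul c₁).mono' ?_ ?_
    · exact (hu'cont.mono (Ioi_subset_Ioi hR0.le)).aestronglyMeasurable measurableSet_Ioi
    · refine (ae_restrict_iff' measurableSet_Ioi).2 (ae_of_all _ fun r hr => ?_)
      rw [Real.norm_eq_abs]
      exact hu'bound r (le_trans hR (le_of_lt hr))
  -- FTC for u
  have hFTCu : ∀ R ≥ (1:ℝ), ∀ R₁ ≥ R, u R₁ - u R = ∫ r in R..R₁, deriv u r := by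
    intro R hR R₁ hR₁
    refine (intervalIntegral.integral_eq_sub_of_hasDerivAt
      (f := u) (f' := deriv u) ?_ ?_).symm
    · exact fun x hx => hudiff x (hsub R hR R₁ hR₁ hx)
    · exact (hu'cont.mono (hsub R hR R₁ hR₁)).intervalIntegrable
  -- limit of u
  have htend2 : Tendsto (fun R₁ => ∫ r in (1:ℝ)..R₁, deriv u r) atTop
      (nhds (∫ r in Ioi (1:ℝ), deriv u r)) :=
    intervalIntegral_tendsto_integral_Ioi 1 (hu'int 1 le_rfl) tendsto_id
  have hutend : Tendsto u atTop (nhds (u 1 + ∫ r in Ioi (1:ℝ), deriv u r)) := by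
    refine ((htend2.const_add (u 1)).congr' ?_)
    filter_upwards [eventually_ge_atTop (1:ℝ)] with x hx
    have := hFTCu 1 le_rfl x hx
    linarith
  have hLu0 : u 1 + ∫ r in Ioi (1:ℝ), deriv u r = 0 :=
    limit_zero_of_memL2 huL2 hutend
  rw [hLu0] at hutend
  have hu_eq : ∀ R ≥ (1:ℝ), u R = -∫ r in Ioi R, deriv u r := by
    intro R hR
    have h1 : Tendsto (fun R₁ => u R₁ - u R) atTop (nhds (0 - u R)) :=
      hutend.sub_const _
    have h2 : Tendsto (fun R₁ => ∫ r in R..R₁, deriv u r) atTop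
        (nhds (∫ r in Ioi R, deriv u r)) :=
      intervalIntegral_tendsto_integral_Ioi R (hu'int R hR) tendsto_id
    have h3 : (fun R₁ => u R₁ - u R) =ᶠ[atTop]
        fun R₁ => ∫ r in R..R₁, deriv u r := by
      filter_upwards [eventually_ge_atTop R] with x hx using hFTCu R hR x hx
    have h4 := tendsto_nhds_unique (h1.congr' h3) h2
    linarith
  -- bound on u
  have hubound : ∀ R ≥ (1:ℝ), |u R| ≤ 2 * c₁ * R ^ (-(1:ℝ)/2) := by
    intro R hR
    have hR0 : (0:ℝ) < R := lt_of_lt_of_le one_pos hR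
    have hmaj : IntegrableOn (fun r : ℝ => c₁ * r ^ (-(3:ℝ)/2)) (Ioi R) volume :=
      (integrableOn_Ioi_rpow_of_lt (by norm_num : -(3:ℝ)/2 < -1) hR0).const_mul c₁
    rw [hu_eq R hR, abs_neg]
    calc |∫ r in Ioi R, deriv u r| ≤ ∫ r in Ioi R, |deriv u r| := by
          simpa only [Real.norm_eq_abs] using
            norm_integral_le_integral_norm (μ := volume.restrict (Ioi R))
              (f := deriv u)
      _ ≤ ∫ r in Ioi R, c₁ * r ^ (-(3:ℝ)/2) := by
          refine setIntegral_mono_on (hu'int R hR).abs hmaj measurableSet_Ioi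
            fun r hr => ?_
          exact hu'bound r (le_trans hR (le_of_lt hr))
      _ = c₁ * ∫ r in Ioi R, r ^ (-(3:ℝ)/2) := integral_const_mul _ _
      _ = 2 * c₁ * R ^ (-(1:ℝ)/2) := by
          rw [show (-(3:ℝ)/2) = (-(3/2):ℝ) by norm_num,
            integral_Ioi_rpow_of_lt (by norm_num) hR0]
          rw [show (-(3/2):ℝ) + 1 = -(1:ℝ)/2 by norm_num]
          ring
  -- conclusion
  refine ⟨2 * c₁ + 1, fun R hR => ⟨?_, ?_⟩⟩
  · have h := hu'bound R hR
    have hp : (0:ℝ) ≤ R ^ (-(3:ℝ)/2) :=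
      (Real.rpow_pos_of_pos (lt_of_lt_of_le one_pos hR) _).le
    nlinarith
  · have h := hubound R hR
    have hp : (0:ℝ) ≤ R ^ (-(1:ℝ)/2) :=
      (Real.rpow_pos_of_pos (lt_of_lt_of_le one_pos hR) _).le
    nlinarith
end

section
/- Let u ∈ C²(0,∞) be positive and satisfy u''(r) ≥ (1-δ) u(r) for r ≥ r₀ (0 < δ < 1), with u and u' square-integrable on (r₀,∞). Then u(r)² ≤ C e^{-√(2(1-δ)) r} as r → ∞. -/
open MeasureTheory Set

theorem stmt17 (u : ℝ → ℝ) (δ r₀ : ℝ) (hδ : 0 < δ) (hδ1 : δ < 1) (hr₀ : 0 < r₀)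
    (hu : ContDiffOn ℝ 2 u (Ioi 0)) (hupos : ∀ r > (0:ℝ), 0 < u r)
    (hineq : ∀ r ≥ r₀, (1 - δ) * u r ≤ deriv (deriv u) r)
    (huL2 : IntegrableOn (fun r => (u r)^2) (Ioi r₀))
    (hu'L2 : IntegrableOn (fun r => (deriv u r)^2) (Ioi r₀)) :
    ∃ C : ℝ, ∀ r ≥ r₀,
      (u r)^2 ≤ C * Real.exp (-Real.sqrt (2 * (1 - δ)) * r) := by
  set k := Real.sqrt (2 * (1 - δ)) with hkdef
  have hk2 : k ^ 2 = 2 * (1 - δ) := Real.sq_sqrt (by linarith)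
  have hkpos : 0 < k := Real.sqrt_pos.mpr (by linarith)
  -- differentiability facts
  have hu2 : ContDiffOn ℝ (1 + 1) u (Ioi 0) := by
    exact hu.of_le (by norm_num)
  obtain ⟨hudiff, -, hu'c1⟩ := (contDiffOn_succ_iff_deriv_of_isOpen isOpen_Ioi).mp hu2
  have hu'diff : DifferentiableOn ℝ (deriv u) (Ioi 0) :=
    hu'c1.differentiableOn (by norm_num)
  have hdu : ∀ r ∈ Ioi (0:ℝ), HasDerivAt u (deriv u r) r := fun r hr =>
    (hudiff.differentiableAt (isOpen_Ioi.mem_nhds hr)).hasDerivAt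
  have hdu' : ∀ r ∈ Ioi (0:ℝ), HasDerivAt (deriv u) (deriv (deriv u) r) r := fun r hr =>
    (hu'diff.differentiableAt (isOpen_Ioi.mem_nhds hr)).hasDerivAt
  set G : ℝ → ℝ := fun r => Real.exp (-k * r) * (2 * u r * deriv u r + k * (u r) ^ 2)
    with hGdef
  have hGd : ∀ r ∈ Ioi (0:ℝ), HasDerivAt G
      (Real.exp (-k * r) * (2 * (deriv u r)^2 + 2 * u r * deriv (deriv u) r
        - k^2 * (u r)^2)) r := by
    intro r hr
    have h1 : HasDerivAt (fun x => Real.exp (-k * x)) (Real.exp (-k * r) * (-k)) r := by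
      simpa using ((hasDerivAt_id r).const_mul (-k)).exp
    have h2 : HasDerivAt (fun x => 2 * u x * deriv u x + k * (u x) ^ 2)
        ((2 * deriv u r) * deriv u r + (2 * u r) * deriv (deriv u) r
          + k * (2 * u r ^ (2-1) * deriv u r)) r := by
      exact (((hdu r hr).const_mul 2).mul (hdu' r hr)).add (((hdu r hr).pow 2).const_mul k)
    exact (h1.fun_mul h2).congr_deriv (by ring)
  have hhd : ∀ r ∈ Ioi (0:ℝ), HasDerivAt (fun x => Real.exp (k * x) * (u x) ^ 2)
      (Real.exp (k * r) * k * (u r)^2 + Real.exp (k * r) * (2 * u r * deriv u r)) r := by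
    intro r hr
    have h1 : HasDerivAt (fun x => Real.exp (k * x)) (Real.exp (k * r) * k) r := by
      simpa using ((hasDerivAt_id r).const_mul k).exp
    have h2 : HasDerivAt (fun x => (u x) ^ 2) (2 * u r ^ (2-1) * deriv u r) r :=
      (hdu r hr).pow 2
    exact (h1.fun_mul h2).congr_deriv (by ring)
  -- G is monotone on Ici r₀
  have hGmono : MonotoneOn G (Ici r₀) := by
    apply monotoneOn_of_deriv_nonneg (convex_Ici r₀)
    · intro r hr
      exact ((hGd r (lt_of_lt_of_le hr₀ hr)).differentiableAt).continuousAt.continuousWithinAt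
    · rw [interior_Ici]
      intro r hr
      exact ((hGd r (lt_trans hr₀ hr)).differentiableAt).differentiableWithinAt
    · rw [interior_Ici]
      intro r hr
      have hr0 : (0:ℝ) < r := lt_trans hr₀ hr
      rw [(hGd r hr0).deriv, hk2]
      have h1 := hineq r (le_of_lt hr)
      have h2 := hupos r hr0
      apply mul_nonneg (Real.exp_pos _).le
      nlinarith [sq_nonneg (deriv u r), mul_le_mul_of_nonneg_left h1 h2.le]
  -- G is nonpositive on Ici r₀
  have hGle : ∀ r ≥ r₀, G r ≤ 0 := by
    by_contra hcon
    push_neg at hcon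
    obtain ⟨r₁, hr₁, hGr₁⟩ := hcon
    set c := G r₁ with hcdef
    have hr₁0 : (0:ℝ) < r₁ := lt_of_lt_of_le hr₀ hr₁
    -- φ r = exp(kr) u² - c/(2k) (exp(kr))²  is monotone on Ici r₁
    set φ : ℝ → ℝ := fun r => Real.exp (k * r) * (u r) ^ 2
      - c / (2 * k) * (Real.exp (k * r)) ^ 2 with hφdef
    have hφd : ∀ r ∈ Ioi (0:ℝ), HasDerivAt φ
        (Real.exp (k * r) * k * (u r)^2 + Real.exp (k * r) * (2 * u r * deriv u r)
          - c / (2 * k) * (2 * Real.exp (k * r) * (Real.exp (k * r) * k))) r := by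
      intro r hr
      have h1 : HasDerivAt (fun x => Real.exp (k * x)) (Real.exp (k * r) * k) r := by
        simpa using ((hasDerivAt_id r).const_mul k).exp
      have h2 : HasDerivAt (fun x => (Real.exp (k * x)) ^ 2)
          (2 * (Real.exp (k * r)) ^ (2-1) * (Real.exp (k * r) * k)) r := h1.pow 2
      have := (hhd r hr).sub (h2.const_mul (c / (2 * k)))
      exact this.congr_deriv (by ring)
    have hφmono : MonotoneOn φ (Ici r₁) := by
      apply monotoneOn_of_deriv_nonneg (convex_Ici r₁)
      · intro r hr
        exact ((hφd r (lt_of_lt_of_le hr₁0 hr)).differentiableAt).continuousAt.continuousWithinAt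
      · rw [interior_Ici]
        intro r hr
        exact ((hφd r (lt_trans hr₁0 hr)).differentiableAt).differentiableWithinAt
      · rw [interior_Ici]
        intro r hr
        have hr0 : (0:ℝ) < r := lt_trans hr₁0 hr
        rw [(hφd r hr0).deriv]
        have hGr : c ≤ G r := hGmono (mem_Ici.mpr hr₁) (mem_Ici.mpr (le_trans hr₁ (le_of_lt hr)))
          (le_of_lt hr)
        have hE : Real.exp (-k * r) * Real.exp (k * r) = 1 := by
          rw [← Real.exp_add]; ring_nf; exact Real.exp_zero
        have hEpos := Real.exp_pos (k * r)
        have hS : c * Real.exp (k * r) ≤ 2 * u r * deriv u r + k * (u r) ^ 2 := by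
          have := mul_le_mul_of_nonneg_right hGr (le_of_lt hEpos)
          calc c * Real.exp (k * r) ≤ G r * Real.exp (k * r) := this
            _ = (Real.exp (-k * r) * Real.exp (k * r)) * (2 * u r * deriv u r + k * (u r) ^ 2) := by
                simp only [hGdef]; ring
            _ = 2 * u r * deriv u r + k * (u r) ^ 2 := by rw [hE]; ring
        have := mul_le_mul_of_nonneg_left hS (le_of_lt hEpos)
        have hk' : c / (2 * k) * (2 * Real.exp (k * r) * (Real.exp (k * r) * k))
            = c * Real.exp (k * r) * Real.exp (k * r) := by
          field_simp
        nlinarith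
    -- lower bound: u² ≥ 1 eventually
    set M := |φ r₁| with hMdef
    set r₂ := max r₁ (Real.log (2 * k * (1 + M) / c) / k) with hr₂def
    have hcpos : 0 < c := hGr₁
    have hMpos : 0 ≤ M := abs_nonneg _
    have hlb : ∀ r > r₂, 1 ≤ (u r) ^ 2 := by
      intro r hr
      have hrr₁ : r₁ ≤ r := le_trans (le_max_left _ _) (le_of_lt hr)
      have hφ := hφmono (mem_Ici.mpr (le_refl r₁)) (mem_Ici.mpr hrr₁) hrr₁
      -- φ r₁ ≤ φ r  gives exp(kr) u² ≥ c/(2k) exp(kr)² - M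
      have h1 : c / (2 * k) * (Real.exp (k * r)) ^ 2 - M ≤ Real.exp (k * r) * (u r) ^ 2 := by
        have hM1 := neg_abs_le (φ r₁)
        rw [← hMdef] at hM1
        simp only [hφdef] at hφ hM1
        linarith
      have hEr : 2 * k * (1 + M) / c ≤ Real.exp (k * r) := by
        have hX : 0 < 2 * k * (1 + M) / c := by positivity
        have : Real.log (2 * k * (1 + M) / c) / k < r := lt_of_le_of_lt (le_max_right _ _) hr
        have hkr : Real.log (2 * k * (1 + M) / c) ≤ k * r := by
          rw [div_lt_iff₀ hkpos] at this
          linarith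
        calc 2 * k * (1 + M) / c = Real.exp (Real.log (2 * k * (1 + M) / c)) := by
              rw [Real.exp_log hX]
          _ ≤ Real.exp (k * r) := Real.exp_le_exp.mpr hkr
      have hEpos := Real.exp_pos (k * r)
      have hE1 : 1 ≤ Real.exp (k * r) := by
        have hx : 0 ≤ k * r := by
          have : 0 < r := lt_of_lt_of_le hr₁0 hrr₁
          positivity
        simpa using Real.exp_le_exp.mpr hx
      -- c/(2k) * E² - M ≥ E * ((1+M) - M/E ...)
      have key : Real.exp (k * r) * 1 ≤ Real.exp (k * r) * (u r) ^ 2 := by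
        have h2 : 1 + M ≤ c / (2 * k) * Real.exp (k * r) := by
          have heq : c / (2 * k) * (2 * k * (1 + M) / c) = 1 + M := by
            field_simp
          calc 1 + M = c / (2 * k) * (2 * k * (1 + M) / c) := heq.symm
            _ ≤ c / (2 * k) * Real.exp (k * r) :=
                mul_le_mul_of_nonneg_left hEr (by positivity)
        calc Real.exp (k * r) * 1 = Real.exp (k * r) := by ring
          _ ≤ c / (2 * k) * (Real.exp (k * r)) ^ 2 - M := by
              nlinarith [mul_le_mul_of_nonneg_right h2 hEpos.le,
                mul_nonneg hMpos (by linarith : (0:ℝ) ≤ Real.exp (k * r) - 1)]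
          _ ≤ Real.exp (k * r) * (u r) ^ 2 := h1
      exact le_of_mul_le_mul_left key hEpos
    -- contradiction with integrability
    set r₃ := max r₀ r₂ with hr₃def
    have hint : IntegrableOn (fun r => (u r) ^ 2) (Ioi r₃) :=
      huL2.mono_set (Ioi_subset_Ioi (le_max_left _ _))
    have hone : IntegrableOn (fun _ : ℝ => (1:ℝ)) (Ioi r₃) := by
      apply Integrable.mono' hint aestronglyMeasurable_const
      rw [ae_restrict_iff' measurableSet_Ioi]
      filter_upwards with r hr
      simpa using hlb r (lt_of_le_of_lt (le_max_right _ _) hr)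
    rw [integrableOn_const_iff] at hone
    rcases hone with h | h
    · norm_num at h
    · simp [Real.volume_Ioi] at h
  -- conclude: exp(kr) u² is antitone on Ici r₀
  refine ⟨Real.exp (k * r₀) * (u r₀) ^ 2, fun r hr => ?_⟩
  have hanti : AntitoneOn (fun x => Real.exp (k * x) * (u x) ^ 2) (Ici r₀) := by
    apply antitoneOn_of_deriv_nonpos (convex_Ici r₀)
    · intro x hx
      exact ((hhd x (lt_of_lt_of_le hr₀ hx)).differentiableAt).continuousAt.continuousWithinAt
    · rw [interior_Ici]
      intro x hx
      exact ((hhd x (lt_trans hr₀ hx)).differentiableAt).differentiableWithinAt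
    · rw [interior_Ici]
      intro x hx
      have hx0 : (0:ℝ) < x := lt_trans hr₀ hx
      rw [(hhd x hx0).deriv]
      have hGx : G x ≤ 0 := hGle x (le_of_lt hx)
      have hE : Real.exp (-k * x) * Real.exp (k * x) = 1 := by
        rw [← Real.exp_add]; ring_nf; exact Real.exp_zero
      have hEpos := Real.exp_pos (k * x)
      have hS : 2 * u x * deriv u x + k * (u x) ^ 2 ≤ 0 := by
        have := mul_le_mul_of_nonneg_right hGx (le_of_lt hEpos)
        calc 2 * u x * deriv u x + k * (u x) ^ 2
            = (Real.exp (-k * x) * Real.exp (k * x)) * (2 * u x * deriv u x + k * (u x) ^ 2) := by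
              rw [hE]; ring
          _ = G x * Real.exp (k * x) := by simp only [hGdef]; ring
          _ ≤ 0 * Real.exp (k * x) := this
          _ = 0 := by ring
      nlinarith
  have := hanti (mem_Ici.mpr (le_refl r₀)) (mem_Ici.mpr hr) hr
  simp only at this
  have hE : Real.exp (-k * r) * Real.exp (k * r) = 1 := by
    rw [← Real.exp_add]; ring_nf; exact Real.exp_zero
  have hEpos := Real.exp_pos (k * r)
  have hEpos' := Real.exp_pos (-k * r)
  calc (u r) ^ 2 = (Real.exp (-k * r) * Real.exp (k * r)) * (u r) ^ 2 := by rw [hE]; ring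
    _ = Real.exp (-k * r) * (Real.exp (k * r) * (u r) ^ 2) := by ring
    _ ≤ Real.exp (-k * r) * (Real.exp (k * r₀) * (u r₀) ^ 2) := by
        apply mul_le_mul_of_nonneg_left this (le_of_lt hEpos')
    _ = Real.exp (k * r₀) * (u r₀) ^ 2 * Real.exp (-k * r) := by ring
end
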